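/- arXiv:2110.01564 — 7 statements merged into one kernel-verified Lean document; each statement's English description precedes it below -/
import Mathlib

section
/- Let M, k ∈ ℕ, let U : Fin M → Fin M → ℂ be a matrix, and let f, g : Fin k → Fin M be functions. For i, j ∈ Fin M set n(i) = |{a : Fin k | f(a) = i}| and m(j) = |{b : Fin k | g(b) = j}|. Then the permanent of the k×k matrix V defined by V(a,b) = U(f(a), g(b)) satisfies Per(V) = Σ_τ [ (∏_i n(i)!) · (∏_j m(j)!) / (∏_{i,j} τ(i,j)!) ] · ∏_{i,j} U(i,j)^{τ(i,j)}, where the sum ranges over all functions τ : Fin M → Fin M → ℕ with row sums Σ_j τ(i,j) = n(i) for every i and column sums Σ_i τ(i,j) = m(j) for every j. -/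
open Finset

section Aux

/-- instance-robust congruence for cards of finsets -/
lemma aux_card_congr {α : Type*} {s t : Finset α} (h : ∀ a, a ∈ s ↔ a ∈ t) :
    s.card = t.card :=
  congrArg Finset.card (Finset.ext h)

lemma aux_ncard_filter {γ : Type*} [Fintype γ] (P : γ → Prop) [DecidablePred P] :
    Set.ncard {x | P x} = (univ.filter P).card := by
  rw [← Set.ncard_coe_finset]
  congr 1
  ext x; simp

variable {α β : Type*} [Fintype α] [DecidableEq α] [DecidableEq β]

/-- existence of a permutation transporting one function to another with equal fiber sizes -/
lemma aux_exists_perm_comp (p q : α → β)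
    (h : ∀ b, Fintype.card {a // p a = b} = Fintype.card {a // q a = b}) :
    ∃ σ : Equiv.Perm α, ∀ a, p (σ a) = q a := by
  have e : ∀ b, {a // q a = b} ≃ {a // p a = b} := fun b => Fintype.equivOfCardEq (h b).symm
  exact ⟨Equiv.ofFiberEquiv e, fun a => Equiv.ofFiberEquiv_map e a⟩

/-- card of a filter composed with a permutation -/
lemma aux_card_filter_perm (σ : Equiv.Perm α) (p : α → Prop) [DecidablePred p] :
    (univ.filter fun a => p (σ a)).card = (univ.filter p).card := by
  refine card_nbij' σ σ.symm ?_ ?_ ?_ ?_ <;> simp [Set.MapsTo, Set.LeftInvOn, Set.RightInvOn]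

/-- the key coset count: permutations transporting p to q -/
lemma aux_card_perm_comp [Fintype β] (p q : α → β)
    (h : ∀ b, (univ.filter fun a => p a = b).card = (univ.filter fun a => q a = b).card) :
    (univ.filter fun σ : Equiv.Perm α => ∀ a, p (σ a) = q a).card
      = ∏ b, ((univ.filter fun a => p a = b).card).factorial := by
  have h' : ∀ b, Fintype.card {a // p a = b} = Fintype.card {a // q a = b} := by
    intro b; simpa [Fintype.card_subtype] using h b
  obtain ⟨σ₀, hσ₀⟩ := aux_exists_perm_comp p q h'
  have step1 : (univ.filter fun σ : Equiv.Perm α => ∀ a, p (σ a) = q a).card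
      = (univ.filter fun π : Equiv.Perm α => ∀ a, q (π a) = q a).card := by
    refine card_nbij' (fun σ => σ₀⁻¹ * σ) (fun π => σ₀ * π) ?_ ?_ ?_ ?_
    · intro σ hσ
      simp only [mem_coe, mem_filter, mem_univ, true_and] at hσ ⊢
      intro a
      have h1 : q ((σ₀⁻¹ * σ) a) = p (σ a) := by
        rw [← hσ₀ ((σ₀⁻¹ * σ) a)]
        simp [Equiv.Perm.mul_apply]
      rw [h1, hσ a]
    · intro π hπ
      simp only [mem_coe, mem_filter, mem_univ, true_and] at hπ ⊢
      intro a
      calc p ((σ₀ * π) a) = q (π a) := by simp [Equiv.Perm.mul_apply, hσ₀]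
        _ = q a := hπ a
    · intro σ _; group
    · intro π _; group
  rw [step1]
  calc (univ.filter fun π : Equiv.Perm α => ∀ a, q (π a) = q a).card
      = Set.ncard {π : Equiv.Perm α | q ∘ π = q} := by
        rw [aux_ncard_filter]
        exact aux_card_congr fun π => by simp [funext_iff, Function.comp_def]
    _ = ∏ b, (Set.ncard {a | q a = b}).factorial := DomMulAct.stabilizer_ncard q
    _ = ∏ b, ((univ.filter fun a => p a = b).card).factorial := by
        refine Finset.prod_congr rfl fun b _ => ?_
        congr 1
        rw [aux_ncard_filter]
        exact (h b).symm

end Aux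

section Fibers

/-- equiv between the fiber of a sigma type over its first coordinate and the fiber type -/
def auxFiberFin {M : ℕ} (t : Fin M → ℕ) (j : Fin M) :
    {x : Σ j' : Fin M, Fin (t j') // x.1 = j} ≃ Fin (t j) where
  toFun x := Fin.cast (by rw [x.2]) x.1.2
  invFun y := ⟨⟨j, y⟩, rfl⟩
  left_inv := by rintro ⟨⟨j', y⟩, h⟩; subst h; rfl
  right_inv y := rfl

/-- existence of a function with prescribed joint fiber sizes over a given function -/
lemma aux_exists_fn_fibers {k M : ℕ} (f : Fin k → Fin M) (τ : Fin M → Fin M → ℕ)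
    (hrow : ∀ i, ∑ j, τ i j = (univ.filter fun a => f a = i).card) :
    ∃ c : Fin k → Fin M, ∀ i j, (univ.filter fun a => f a = i ∧ c a = j).card = τ i j := by
  classical
  have hcard : ∀ i, Fintype.card {a // f a = i} = Fintype.card (Σ j : Fin M, Fin (τ i j)) := by
    intro i
    simp [Fintype.card_subtype, Fintype.card_sigma, ← hrow i]
  have E : ∀ i, {a // f a = i} ≃ (Σ j : Fin M, Fin (τ i j)) :=
    fun i => Fintype.equivOfCardEq (hcard i)
  refine ⟨fun a => (E (f a) ⟨a, rfl⟩).1, ?_⟩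
  intro i j
  have hc : ∀ (a : Fin k) (h : f a = i), (E (f a) ⟨a, rfl⟩).1 = (E i ⟨a, h⟩).1 := by
    intro a h; subst h; rfl
  rw [← Fintype.card_subtype, ← Fintype.card_fin (τ i j)]
  refine Fintype.card_congr ?_
  refine Equiv.trans ?_ (auxFiberFin (τ i) j)
  refine Equiv.trans (Equiv.subtypeSubtypeEquivSubtypeInter (fun a => f a = i)
    (fun a => (E (f a) ⟨a, rfl⟩).1 = j)).symm ?_
  refine Equiv.subtypeEquiv (E i) ?_
  rintro ⟨a, ha⟩
  simp [hc a ha]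

end Fibers

/-- summing joint fiber counts over the first index gives the second fiber count -/
lemma aux_sum_card_fst {k M : ℕ} (u v : Fin k → Fin M) (j : Fin M) :
    ∑ i, (univ.filter fun a => u a = i ∧ v a = j).card
      = (univ.filter fun a => v a = j).card := by
  rw [Finset.card_eq_sum_card_fiberwise (f := u) (t := univ) (fun a _ => mem_univ _)]
  refine Finset.sum_congr rfl fun i _ => aux_card_congr fun a => ?_
  simp only [mem_filter, mem_univ, true_and]
  try tauto

/-- summing joint fiber counts over the second index gives the first fiber count -/
lemma aux_sum_card_snd {k M : ℕ} (u v : Fin k → Fin M) (i : Fin M) :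
    ∑ j, (univ.filter fun a => u a = i ∧ v a = j).card
      = (univ.filter fun a => u a = i).card := by
  rw [Finset.card_eq_sum_card_fiberwise (f := v) (t := univ) (fun a _ => mem_univ _)]
  refine Finset.sum_congr rfl fun j _ => aux_card_congr fun a => ?_
  simp only [mem_filter, mem_univ, true_and]
  try tauto

/-- The key counting identity. -/
lemma aux_count_key {k M : ℕ} (f g : Fin k → Fin M) (τ : Fin M → Fin M → ℕ)
    (hrow : ∀ i, ∑ j, τ i j = (univ.filter fun a => f a = i).card)
    (hcol : ∀ j, ∑ i, τ i j = (univ.filter fun b => g b = j).card) :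
    (univ.filter fun σ : Equiv.Perm (Fin k) =>
        (fun i j => (univ.filter fun a => f a = i ∧ g (σ a) = j).card) = τ).card
      * ∏ i, ∏ j, (τ i j).factorial
    = (∏ i, ((univ.filter fun a => f a = i).card).factorial)
      * ∏ j, ((univ.filter fun b => g b = j).card).factorial := by
  classical
  set Cs := univ.filter (fun c : Fin k → Fin M =>
    ∀ i j, (univ.filter fun a => f a = i ∧ c a = j).card = τ i j) with hCs
  obtain ⟨c₀, hc₀⟩ := aux_exists_fn_fibers f τ hrow
  have transport : ∀ (σ : Equiv.Perm (Fin k)), (∀ a, f (σ a) = f a) →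
      ∀ (c : Fin k → Fin M) i j,
      (univ.filter fun a => f a = i ∧ c (σ a) = j).card
        = (univ.filter fun a => f a = i ∧ c a = j).card := by
    intro σ hσ c i j
    calc (univ.filter fun a => f a = i ∧ c (σ a) = j).card
        = (univ.filter fun a => f (σ a) = i ∧ c (σ a) = j).card :=
          aux_card_congr fun a => by simp [hσ a]
      _ = (univ.filter fun a => f a = i ∧ c a = j).card :=
          aux_card_filter_perm σ (fun a => f a = i ∧ c a = j)
  -- (A) : ∏ n! = Cs.card * ∏ τ!
  have hA : (∏ i, ((univ.filter fun a => f a = i).card).factorial)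
      = Cs.card * ∏ i, ∏ j, (τ i j).factorial := by
    have hmapsto : ∀ σ ∈ univ.filter fun σ : Equiv.Perm (Fin k) => ∀ a, f (σ a) = f a,
        (fun a => c₀ (σ a)) ∈ Cs := by
      intro σ hσ
      simp only [mem_filter, mem_univ, true_and, hCs] at hσ ⊢
      intro i j
      rw [transport σ hσ c₀ i j]
      exact hc₀ i j
    calc (∏ i, ((univ.filter fun a => f a = i).card).factorial)
        = (univ.filter fun σ : Equiv.Perm (Fin k) => ∀ a, f (σ a) = f a).card :=
          Eq.symm ((aux_card_congr fun σ => by simp).trans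
            (aux_card_perm_comp f f fun _ => rfl))
      _ = ∑ c ∈ Cs, ((univ.filter fun σ : Equiv.Perm (Fin k) => ∀ a, f (σ a) = f a).filter
            (fun σ => (fun a => c₀ (σ a)) = c)).card :=
          Finset.card_eq_sum_card_fiberwise hmapsto
      _ = ∑ c ∈ Cs, ∏ i, ∏ j, (τ i j).factorial := by
          refine Finset.sum_congr rfl fun c hc => ?_
          simp only [hCs, mem_filter, mem_univ, true_and] at hc
          calc ((univ.filter fun σ : Equiv.Perm (Fin k) => ∀ a, f (σ a) = f a).filter
                (fun σ => (fun a => c₀ (σ a)) = c)).card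
              = (univ.filter fun σ : Equiv.Perm (Fin k) =>
                  ∀ a, (f (σ a), c₀ (σ a)) = (f a, c a)).card :=
                aux_card_congr fun σ => by
                  simp only [mem_filter, mem_univ, true_and, funext_iff, Prod.mk.injEq,
                    forall_and]
                  try tauto
            _ = ∏ x : Fin M × Fin M,
                  ((univ.filter fun a => (f a, c₀ a) = x).card).factorial := by
                refine Eq.trans (aux_card_congr fun σ => ?_)
                  (aux_card_perm_comp (fun a => (f a, c₀ a)) (fun a => (f a, c a)) ?_)
                · simp
                intro x
                calc (univ.filter fun a => (f a, c₀ a) = x).card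
                    = (univ.filter fun a => f a = x.1 ∧ c₀ a = x.2).card :=
                      aux_card_congr fun a => by simp [Prod.ext_iff]
                  _ = τ x.1 x.2 := hc₀ x.1 x.2
                  _ = (univ.filter fun a => f a = x.1 ∧ c a = x.2).card := (hc x.1 x.2).symm
                  _ = (univ.filter fun a => (f a, c a) = x).card :=
                      aux_card_congr fun a => by simp [Prod.ext_iff]
            _ = ∏ i, ∏ j, (τ i j).factorial := by
                rw [Fintype.prod_prod_type]
                refine Finset.prod_congr rfl fun i _ => Finset.prod_congr rfl fun j _ => ?_
                congr 1
                exact (aux_card_congr fun a => by simp [Prod.ext_iff]).trans (hc₀ i j)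
      _ = Cs.card * ∏ i, ∏ j, (τ i j).factorial := by
          rw [Finset.sum_const, smul_eq_mul]
  -- (B) : N = Cs.card * ∏ m!
  have hB : (univ.filter fun σ : Equiv.Perm (Fin k) =>
        (fun i j => (univ.filter fun a => f a = i ∧ g (σ a) = j).card) = τ).card
      = Cs.card * ∏ j, ((univ.filter fun b => g b = j).card).factorial := by
    have hmapsto : ∀ σ ∈ univ.filter (fun σ : Equiv.Perm (Fin k) =>
        (fun i j => (univ.filter fun a => f a = i ∧ g (σ a) = j).card) = τ),
        (fun a => g (σ a)) ∈ Cs := by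
      intro σ hσ
      simp only [mem_filter, mem_univ, true_and, funext_iff, hCs] at hσ ⊢
      exact hσ
    calc (univ.filter fun σ : Equiv.Perm (Fin k) =>
          (fun i j => (univ.filter fun a => f a = i ∧ g (σ a) = j).card) = τ).card
        = ∑ c ∈ Cs, ((univ.filter fun σ : Equiv.Perm (Fin k) =>
            (fun i j => (univ.filter fun a => f a = i ∧ g (σ a) = j).card) = τ).filter
            (fun σ => (fun a => g (σ a)) = c)).card :=
          Finset.card_eq_sum_card_fiberwise hmapsto
      _ = ∑ c ∈ Cs, ∏ j, ((univ.filter fun b => g b = j).card).factorial := by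
          refine Finset.sum_congr rfl fun c hc => ?_
          simp only [hCs, mem_filter, mem_univ, true_and] at hc
          calc ((univ.filter fun σ : Equiv.Perm (Fin k) =>
                (fun i j => (univ.filter fun a => f a = i ∧ g (σ a) = j).card) = τ).filter
                (fun σ => (fun a => g (σ a)) = c)).card
              = (univ.filter fun σ : Equiv.Perm (Fin k) => ∀ a, g (σ a) = c a).card := by
                refine aux_card_congr fun σ => ?_
                simp only [mem_filter, mem_univ, true_and, funext_iff]
                constructor
                · rintro ⟨_, h2⟩; exact h2
                · intro h
                  refine ⟨?_, h⟩
                  intro i j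
                  exact (aux_card_congr fun a => by simp [h a]).trans (hc i j)
            _ = ∏ j, ((univ.filter fun b => g b = j).card).factorial := by
                refine Eq.trans (aux_card_congr fun σ => ?_) (aux_card_perm_comp g c ?_)
                · simp
                intro j
                calc (univ.filter fun a => g a = j).card = ∑ i, τ i j := (hcol j).symm
                  _ = ∑ i, (univ.filter fun a => f a = i ∧ c a = j).card :=
                    Finset.sum_congr rfl fun i _ => (hc i j).symm
                  _ = (univ.filter fun a => c a = j).card := aux_sum_card_fst f c j
      _ = Cs.card * ∏ j, ((univ.filter fun b => g b = j).card).factorial := by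
          rw [Finset.sum_const, smul_eq_mul]
  rw [hB, hA]
  ring

/-- permanent of a matrix with repeated rows and columns as a weighted
sum over nonnegative-integer matrices with prescribed margins. -/
theorem stmt_0 (M k : ℕ) (U : Fin M → Fin M → ℂ) (f g : Fin k → Fin M)
    (n m : Fin M → ℕ)
    (hn : ∀ i, n i = (Finset.univ.filter fun a => f a = i).card)
    (hm : ∀ j, m j = (Finset.univ.filter fun b => g b = j).card)
    (S : Finset (Fin M → Fin M → ℕ))
    (hS : ∀ τ : Fin M → Fin M → ℕ,
      τ ∈ S ↔ ((∀ i, ∑ j, τ i j = n i) ∧ (∀ j, ∑ i, τ i j = m j))) :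
    (∑ σ : Equiv.Perm (Fin k), ∏ a, U (f a) (g (σ a))) =
      ∑ τ ∈ S,
        (((∏ i, Nat.factorial (n i) : ℕ) : ℂ) * ((∏ j, Nat.factorial (m j) : ℕ) : ℂ) /
            ((∏ i, ∏ j, Nat.factorial (τ i j) : ℕ) : ℂ)) *
          ∏ i, ∏ j, U i j ^ τ i j := by
  classical
  have hmaps : ∀ σ : Equiv.Perm (Fin k), σ ∈ (univ : Finset (Equiv.Perm (Fin k))) →
      (fun i j => (univ.filter fun a => f a = i ∧ g (σ a) = j).card) ∈ S := by
    intro σ _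
    rw [hS]
    constructor
    · intro i
      rw [hn i]
      exact aux_sum_card_snd f (fun a => g (σ a)) i
    · intro j
      rw [hm j]
      rw [aux_sum_card_fst f (fun a => g (σ a)) j]
      exact aux_card_filter_perm σ (fun b => g b = j)
  rw [← Finset.sum_fiberwise_of_maps_to hmaps
    (fun σ : Equiv.Perm (Fin k) => ∏ a, U (f a) (g (σ a)))]
  refine Finset.sum_congr rfl fun τ hτ => ?_
  obtain ⟨hrow', hcol'⟩ := (hS τ).1 hτ
  have hrow : ∀ i, ∑ j, τ i j = (univ.filter fun a => f a = i).card :=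
    fun i => (hrow' i).trans (hn i)
  have hcol : ∀ j, ∑ i, τ i j = (univ.filter fun b => g b = j).card :=
    fun j => (hcol' j).trans (hm j)
  have hfacpos : 0 < ∏ i, ∏ j, (τ i j).factorial :=
    Finset.prod_pos fun i _ => Finset.prod_pos fun j _ => Nat.factorial_pos _
  have hfacne : ((∏ i, ∏ j, Nat.factorial (τ i j) : ℕ) : ℂ) ≠ 0 :=
    Nat.cast_ne_zero.mpr hfacpos.ne'
  have key := aux_count_key f g τ hrow hcol
  simp only [← hn, ← hm] at key
  calc (∑ σ ∈ univ.filter (fun σ : Equiv.Perm (Fin k) =>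
        (fun i j => (univ.filter fun a => f a = i ∧ g (σ a) = j).card) = τ),
        ∏ a, U (f a) (g (σ a)))
      = ∑ σ ∈ univ.filter (fun σ : Equiv.Perm (Fin k) =>
          (fun i j => (univ.filter fun a => f a = i ∧ g (σ a) = j).card) = τ),
          ∏ i, ∏ j, U i j ^ τ i j := by
        refine Finset.sum_congr rfl fun σ hσ => ?_
        simp only [mem_filter, mem_univ, true_and] at hσ
        have hστ : ∀ i j, (univ.filter fun a => f a = i ∧ g (σ a) = j).card = τ i j :=
          fun i j => congrFun (congrFun hσ i) j
        calc (∏ a, U (f a) (g (σ a)))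
            = ∏ x : Fin M × Fin M,
                ∏ a ∈ univ.filter fun a => (f a, g (σ a)) = x, U (f a) (g (σ a)) :=
              (Finset.prod_fiberwise_of_maps_to (fun a _ => mem_univ _) _).symm
          _ = ∏ x : Fin M × Fin M, U x.1 x.2 ^ τ x.1 x.2 := by
              refine Finset.prod_congr rfl fun x _ => ?_
              have h1 : ∀ a ∈ univ.filter fun a => (f a, g (σ a)) = x,
                  U (f a) (g (σ a)) = U x.1 x.2 := by
                intro a ha
                simp only [mem_filter, mem_univ, true_and, Prod.ext_iff] at ha
                rw [ha.1, ha.2]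
              rw [Finset.prod_congr rfl h1, Finset.prod_const]
              congr 1
              exact (aux_card_congr fun a => by simp [Prod.ext_iff]).trans (hστ x.1 x.2)
          _ = ∏ i, ∏ j, U i j ^ τ i j := Fintype.prod_prod_type _
    _ = ((univ.filter (fun σ : Equiv.Perm (Fin k) =>
          (fun i j => (univ.filter fun a => f a = i ∧ g (σ a) = j).card) = τ)).card : ℂ)
          * ∏ i, ∏ j, U i j ^ τ i j := by
        rw [Finset.sum_const, nsmul_eq_mul]
    _ = (((∏ i, Nat.factorial (n i) : ℕ) : ℂ) * ((∏ j, Nat.factorial (m j) : ℕ) : ℂ) /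
          ((∏ i, ∏ j, Nat.factorial (τ i j) : ℕ) : ℂ)) * ∏ i, ∏ j, U i j ^ τ i j := by
        congr 1
        rw [eq_div_iff hfacne]
        exact_mod_cast key
end

section
/- Let M, k ∈ ℕ, let f, g : Fin k → Fin M, and for i, j ∈ Fin M set n(i) = |{a | f(a) = i}| and m(j) = |{b | g(b) = j}|. Let τ : Fin M → Fin M → ℕ satisfy Σ_j τ(i,j) = n(i) for all i and Σ_i τ(i,j) = m(j) for all j. Then the number of permutations σ of Fin k such that for every pair (i,j) one has |{a : Fin k | f(a) = i and g(σ(a)) = j}| = τ(i,j) equals (∏_i n(i)!) · (∏_j m(j)!) / (∏_{i,j} τ(i,j)!). -/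
open Finset

/-- `Fintype.card` does not depend on the instance. -/
lemma card_indep {X : Type*} (i1 i2 : Fintype X) :
    @Fintype.card X i1 = @Fintype.card X i2 := by
  congr 1
  exact Subsingleton.elim _ _

section aux

variable {α : Type*} [Fintype α] [DecidableEq α] {M : ℕ}

/-- Permutations intertwining two colorings correspond to families of fiber bijections. -/
lemma lemA (g h : α → Fin M)
    (hc : ∀ j, Fintype.card {a // h a = j} = Fintype.card {a // g a = j}) :
    Fintype.card {σ : Equiv.Perm α // ∀ a, g (σ a) = h a}
      = ∏ j, (Fintype.card {a // g a = j}).factorial := by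
  have E : {σ : Equiv.Perm α // ∀ a, g (σ a) = h a}
      ≃ ∀ j, ({a // h a = j} ≃ {a // g a = j}) :=
    { toFun := fun σ j => Equiv.ofBijective
        (fun x => ⟨σ.1 x.1, by rw [σ.2 x.1, x.2]⟩)
        ((Fintype.bijective_iff_injective_and_card _).mpr
          ⟨fun x y hxy => Subtype.ext (σ.1.injective (congrArg Subtype.val hxy)), hc j⟩)
      invFun := fun F =>
        ⟨(Equiv.sigmaFiberEquiv h).symm.trans
          ((Equiv.sigmaCongrRight F).trans (Equiv.sigmaFiberEquiv g)),
         fun a => (F (h a) ⟨a, rfl⟩).2⟩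
      left_inv := fun σ => Subtype.ext (Equiv.ext fun a => rfl)
      right_inv := fun F => by
        funext j
        apply Equiv.ext
        rintro ⟨a, ha⟩
        apply Subtype.ext
        subst ha
        rfl }
  rw [Fintype.card_congr E, Fintype.card_pi]
  refine Finset.prod_congr rfl fun j _ => ?_
  rw [Fintype.card_equiv (Fintype.equivOfCardEq (hc j)), hc j]

lemma fiber_comp (g : α → Fin M) (σ : Equiv.Perm α) (j : Fin M) :
    Fintype.card {a // g (σ a) = j} = Fintype.card {a // g a = j} :=
  Fintype.card_congr (Equiv.subtypeEquiv σ fun _ => Iff.rfl)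

/-- Counting colorings with prescribed fiber cardinalities. -/
lemma lemB (c : Fin M → ℕ) (hsum : ∑ j, c j = Fintype.card α) :
    Fintype.card {u : α → Fin M // ∀ j, Fintype.card {a // u a = j} = c j}
      * ∏ j, (c j).factorial = (Fintype.card α).factorial := by
  classical
  have e : (Σ j : Fin M, Fin (c j)) ≃ α :=
    Fintype.equivOfCardEq (by simpa using hsum)
  set g₀ : α → Fin M := fun a => (e.symm a).1 with hg₀def
  have sig : ∀ j, {p : Σ j', Fin (c j') // p.1 = j} ≃ Fin (c j) := fun j =>
    { toFun := fun q => Fin.cast (congrArg c q.2) q.1.2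
      invFun := fun x => ⟨⟨j, x⟩, rfl⟩
      left_inv := by rintro ⟨⟨j', x⟩, rfl⟩; rfl
      right_inv := fun x => rfl }
  have hg₀ : ∀ j, Fintype.card {a // g₀ a = j} = c j := fun j => by
    rw [Fintype.card_congr ((Equiv.subtypeEquiv e.symm fun a => Iff.rfl).trans (sig j))]
    exact Fintype.card_fin _
  have key : (Finset.univ : Finset (Equiv.Perm α)).card
      = ∑ u : α → Fin M,
          (Finset.univ.filter fun σ : Equiv.Perm α => (fun a => g₀ (σ a)) = u).card :=
    Finset.card_eq_sum_card_fiberwise fun σ _ => Finset.mem_univ _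
  have per : ∀ u : α → Fin M,
      (Finset.univ.filter fun σ : Equiv.Perm α => (fun a => g₀ (σ a)) = u).card
      = if (∀ j, Fintype.card {a // u a = j} = c j) then ∏ j, (c j).factorial else 0 := by
    intro u
    by_cases hu : ∀ j, Fintype.card {a // u a = j} = c j
    · rw [if_pos hu]
      have h1 : (Finset.univ.filter fun σ : Equiv.Perm α => (fun a => g₀ (σ a)) = u).card
          = Fintype.card {σ : Equiv.Perm α // ∀ a, g₀ (σ a) = u a} := by
        rw [Fintype.card_subtype]
        congr 1
        ext σ
        simp [funext_iff]
      rw [h1, lemA g₀ u fun j => by rw [hu j, hg₀ j]]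
      exact Finset.prod_congr rfl fun j _ => by rw [hg₀ j]
    · rw [if_neg hu, Finset.card_eq_zero, Finset.filter_eq_empty_iff]
      intro σ _ hσ
      exact hu fun j => by
        rw [← hσ, fiber_comp g₀ σ j, hg₀ j]
  have : (Fintype.card α).factorial
      = Fintype.card {u : α → Fin M // ∀ j, Fintype.card {a // u a = j} = c j}
        * ∏ j, (c j).factorial := by
    rw [← Fintype.card_perm, Fintype.card, key]
    calc ∑ u : α → Fin M,
          (Finset.univ.filter fun σ : Equiv.Perm α => (fun a => g₀ (σ a)) = u).card
        = ∑ u : α → Fin M,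
            if (∀ j, Fintype.card {a // u a = j} = c j) then ∏ j, (c j).factorial else 0 :=
          Finset.sum_congr rfl fun u _ => per u
      _ = ∑ _u ∈ Finset.univ.filter
            (fun u : α → Fin M => ∀ j, Fintype.card {a // u a = j} = c j),
            ∏ j, (c j).factorial := (Finset.sum_filter _ _).symm
      _ = _ := by
          rw [Finset.sum_const, smul_eq_mul, Fintype.card_subtype]
  exact this.symm

/-- Splitting colorings along the fibers of `f`. -/
lemma lemC {k : ℕ} (f : Fin k → Fin M) (τ : Fin M → Fin M → ℕ) :
    Fintype.card {h : Fin k → Fin M // ∀ i j, Fintype.card {a // f a = i ∧ h a = j} = τ i j}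
      = ∏ i, Fintype.card
          {u : {a // f a = i} → Fin M // ∀ j, Fintype.card {x // u x = j} = τ i j} := by
  classical
  have key : ∀ (u : ∀ i, {u : {a // f a = i} → Fin M //
        ∀ j, Fintype.card {x // (u : {a // f a = i} → Fin M) x = j} = τ i j})
      (a : Fin k) (i : Fin M) (ha : f a = i),
      (u i).1 ⟨a, ha⟩ = (u (f a)).1 ⟨a, rfl⟩ := by
    intro u a i ha; subst ha; rfl
  have E : {h : Fin k → Fin M // ∀ i j, Fintype.card {a // f a = i ∧ h a = j} = τ i j}
      ≃ ∀ i, {u : {a // f a = i} → Fin M //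
          ∀ j, Fintype.card {x // (u : {a // f a = i} → Fin M) x = j} = τ i j} :=
    { toFun := fun h i => ⟨fun x => h.1 x.1, fun j => by
        rw [← h.2 i j]
        exact Fintype.card_congr
          (Equiv.subtypeSubtypeEquivSubtypeInter (fun a => f a = i) (fun a => h.1 a = j))⟩
      invFun := fun u => ⟨fun a => (u (f a)).1 ⟨a, rfl⟩, fun i j => by
        have E2 : {a // f a = i ∧ (u (f a)).1 ⟨a, rfl⟩ = j}
            ≃ {x : {a // f a = i} // (u i).1 x = j} :=
          { toFun := fun p => ⟨⟨p.1, p.2.1⟩, by rw [key u p.1 i p.2.1]; exact p.2.2⟩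
            invFun := fun q => ⟨q.1.1, q.1.2, by rw [← key u q.1.1 i q.1.2]; exact q.2⟩
            left_inv := fun p => rfl
            right_inv := fun q => rfl }
        rw [Fintype.card_congr E2]
        exact (u i).2 j⟩
      left_inv := fun h => Subtype.ext (funext fun a => rfl)
      right_inv := fun u => by
        funext i
        apply Subtype.ext
        funext x
        exact (key u x.1 i x.2).symm }
  rw [Fintype.card_congr E, Fintype.card_pi]

end aux

/-- fiber counting for the map from bipartite perfect matchings of the
blown-up graph to nonnegative-integer matrices with prescribed margins. -/
theorem stmt_1 (M k : ℕ) (f g : Fin k → Fin M) (n m : Fin M → ℕ)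
    (hn : ∀ i, n i = (Finset.univ.filter fun a => f a = i).card)
    (hm : ∀ j, m j = (Finset.univ.filter fun b => g b = j).card)
    (τ : Fin M → Fin M → ℕ)
    (hrow : ∀ i, ∑ j, τ i j = n i) (hcol : ∀ j, ∑ i, τ i j = m j) :
    (Finset.univ.filter fun σ : Equiv.Perm (Fin k) =>
        ∀ i j, (Finset.univ.filter fun a => f a = i ∧ g (σ a) = j).card = τ i j).card =
      (∏ i, Nat.factorial (n i)) * (∏ j, Nat.factorial (m j)) /
        ∏ i, ∏ j, Nat.factorial (τ i j) := by
  classical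
  -- fiber cards of any coloring with pattern τ
  have fibsplit : ∀ (h : Fin k → Fin M) (j : Fin M),
      (Finset.univ.filter fun a => h a = j).card
        = ∑ i, (Finset.univ.filter fun a => f a = i ∧ h a = j).card := by
    intro h j
    rw [Finset.card_eq_sum_card_fiberwise
      (f := f) (t := Finset.univ) (fun a _ => Finset.mem_univ _)]
    refine Finset.sum_congr rfl fun i _ => ?_
    rw [Finset.filter_filter]
    congr 1
    ext a
    simp [and_comm]
  set Q : (Fin k → Fin M) → Prop := fun h =>
    ∀ i j, (Finset.univ.filter fun a => f a = i ∧ h a = j).card = τ i j with hQdef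
  -- step 1: partition the permutations by the induced coloring
  have step1 : (Finset.univ.filter fun σ : Equiv.Perm (Fin k) =>
        ∀ i j, (Finset.univ.filter fun a => f a = i ∧ g (σ a) = j).card = τ i j).card
      = ∑ h : Fin k → Fin M,
          ((Finset.univ.filter fun σ : Equiv.Perm (Fin k) =>
            ∀ i j, (Finset.univ.filter fun a => f a = i ∧ g (σ a) = j).card = τ i j).filter
              fun σ => (fun a => g (σ a)) = h).card :=
    Finset.card_eq_sum_card_fiberwise fun σ _ => Finset.mem_univ _
  -- step 2: each part is counted by lemA
  have step2 : ∀ h : Fin k → Fin M,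
      ((Finset.univ.filter fun σ : Equiv.Perm (Fin k) =>
          ∀ i j, (Finset.univ.filter fun a => f a = i ∧ g (σ a) = j).card = τ i j).filter
            fun σ => (fun a => g (σ a)) = h).card
        = if Q h then ∏ j, (m j).factorial else 0 := by
    intro h
    by_cases hQ : Q h
    · rw [if_pos hQ]
      have hfilter : ((Finset.univ.filter fun σ : Equiv.Perm (Fin k) =>
            ∀ i j, (Finset.univ.filter fun a => f a = i ∧ g (σ a) = j).card = τ i j).filter
              fun σ => (fun a => g (σ a)) = h)
          = Finset.univ.filter fun σ : Equiv.Perm (Fin k) => ∀ a, g (σ a) = h a := by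
        ext σ
        simp only [Finset.mem_filter, Finset.mem_univ, true_and, funext_iff]
        constructor
        · exact fun hp => hp.2
        · intro hp
          refine ⟨fun i j => ?_, hp⟩
          simp only [hp]
          exact hQ i j
      have hc : ∀ j, Fintype.card {a // h a = j} = Fintype.card {a // g a = j} := by
        intro j
        rw [Fintype.card_subtype, Fintype.card_subtype, fibsplit h j]
        have : ∑ i, (Finset.univ.filter fun a => f a = i ∧ h a = j).card = ∑ i, τ i j :=
          Finset.sum_congr rfl fun i _ => hQ i j
        rw [this, hcol j, hm j]
      have h1 : ((Finset.univ.filter fun σ : Equiv.Perm (Fin k) =>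
            ∀ a, g (σ a) = h a)).card
          = Fintype.card {σ : Equiv.Perm (Fin k) // ∀ a, g (σ a) = h a} :=
        (Fintype.card_subtype _).symm
      rw [hfilter, h1]
      refine ((card_indep _ _).trans (lemA g h hc)).trans ?_
      refine Finset.prod_congr rfl fun j _ => ?_
      rw [Fintype.card_subtype, ← hm j]
    · rw [if_neg hQ, Finset.card_eq_zero, Finset.filter_eq_empty_iff]
      intro σ hσ hgσ
      apply hQ
      intro i j
      rw [Finset.mem_filter] at hσ
      have := hσ.2 i j
      have hpt : ∀ a, g (σ a) = h a := funext_iff.mp hgσ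
      simp only [hpt] at this
      exact this
  -- step 3: sum up
  have step3 : (Finset.univ.filter fun σ : Equiv.Perm (Fin k) =>
        ∀ i j, (Finset.univ.filter fun a => f a = i ∧ g (σ a) = j).card = τ i j).card
      = (Finset.univ.filter Q).card * ∏ j, (m j).factorial := by
    rw [step1]
    calc ∑ h : Fin k → Fin M, ((Finset.univ.filter fun σ : Equiv.Perm (Fin k) =>
            ∀ i j, (Finset.univ.filter fun a => f a = i ∧ g (σ a) = j).card = τ i j).filter
              fun σ => (fun a => g (σ a)) = h).card
        = ∑ h : Fin k → Fin M, if Q h then ∏ j, (m j).factorial else 0 :=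
          Finset.sum_congr rfl fun h _ => step2 h
      _ = ∑ _h ∈ Finset.univ.filter Q, ∏ j, (m j).factorial := (Finset.sum_filter _ _).symm
      _ = _ := by rw [Finset.sum_const, smul_eq_mul]
  -- step 4: count Q via lemC
  have hQiff : ∀ h : Fin k → Fin M,
      Q h ↔ ∀ i j, Fintype.card {a // f a = i ∧ h a = j} = τ i j := by
    intro h
    constructor
    · intro hh i j; rw [Fintype.card_subtype]; exact hh i j
    · intro hh i j; rw [← Fintype.card_subtype]; exact hh i j
  have hQcard : (Finset.univ.filter Q).card
      = Fintype.card {h : Fin k → Fin M //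
          ∀ i j, Fintype.card {a // f a = i ∧ h a = j} = τ i j} :=
    (Fintype.card_subtype Q).symm.trans
      (Fintype.card_congr (Equiv.subtypeEquivRight hQiff))
  -- step 5: the inner counts multiply with τ! to give n!
  have step5 : ∀ i : Fin M,
      Fintype.card {u : {a : Fin k // f a = i} → Fin M //
          ∀ j, Fintype.card {x // u x = j} = τ i j} * ∏ j, (τ i j).factorial
        = (n i).factorial := by
    intro i
    have hcard : Fintype.card {a : Fin k // f a = i} = n i := by
      rw [Fintype.card_subtype, hn i]
    exact Eq.trans (congrArg (· * ∏ j, (τ i j).factorial) (card_indep _ _))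
      ((lemB (τ i) (by rw [hcard]; exact hrow i)).trans
        (congrArg Nat.factorial hcard))
  -- combine
  have hden : 0 < ∏ i, ∏ j, (τ i j).factorial :=
    Finset.prod_pos fun i _ => Finset.prod_pos fun j _ => Nat.factorial_pos _
  have key2 : Fintype.card {h : Fin k → Fin M //
        ∀ i j, Fintype.card {a // f a = i ∧ h a = j} = τ i j}
        * ∏ i, ∏ j, (τ i j).factorial = ∏ i, (n i).factorial := by
    exact (congrArg (· * ∏ i, ∏ j, (τ i j).factorial)
        ((card_indep _ _).trans (lemC f τ))).trans
      (Finset.prod_mul_distrib.symm.trans (Finset.prod_congr rfl fun i _ =>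
        (congrArg (· * ∏ j, (τ i j).factorial) (card_indep _ _)).trans (step5 i)))
  have final_eq : (∏ i, Nat.factorial (n i)) * (∏ j, Nat.factorial (m j))
      = (Finset.univ.filter fun σ : Equiv.Perm (Fin k) =>
          ∀ i j, (Finset.univ.filter fun a => f a = i ∧ g (σ a) = j).card = τ i j).card
        * ∏ i, ∏ j, Nat.factorial (τ i j) := by
    rw [step3, hQcard, ← key2]
    ring
  rw [final_eq, Nat.mul_div_cancel _ hden]
end

section
/- For a ∈ ℂ and k ∈ ℕ define T_k(a) = Σ_σ a^{|{i : Fin k | i ≤ σ(i)}|}, where the sum is over all involutive permutations σ of Fin k (permutations with σ ∘ σ = id); equivalently T_k(a) is the loop hafnian of the k×k constant matrix all of whose entries equal a. Then T_0(a) = 1, T_1(a) = a, and for every k ≥ 2, T_k(a) = a · (T_{k−1}(a) + (k−1) · T_{k−2}(a)). -/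
open Equiv Finset

private def Nst {k : ℕ} (σ : Equiv.Perm (Fin k)) : ℕ :=
  (Finset.univ.filter fun i => i ≤ σ i).card

private def Fst {k : ℕ} (σ : Equiv.Perm (Fin k)) : ℕ :=
  (Finset.univ.filter fun i => σ i = i).card

private lemma Nst_eq_sum {k : ℕ} (σ : Equiv.Perm (Fin k)) :
    Nst σ = ∑ i, if i ≤ σ i then 1 else 0 := Finset.card_filter _ _

private lemma Fst_eq_sum {k : ℕ} (σ : Equiv.Perm (Fin k)) :
    Fst σ = ∑ i, if σ i = i then 1 else 0 := Finset.card_filter _ _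

private lemma two_mul_Nst {k : ℕ} (σ : Equiv.Perm (Fin k)) (h : ∀ i, σ (σ i) = i) :
    2 * Nst σ = k + Fst σ := by
  have hBC : (univ.filter fun i : Fin k => i < σ i).card
      = (univ.filter fun i : Fin k => σ i < i).card := by
    apply Finset.card_bij (fun i _ => σ i)
    · intro i hi
      simp only [mem_filter, mem_univ, true_and] at hi ⊢
      rw [h]; exact hi
    · intro i hi j hj hij
      exact σ.injective hij
    · intro c hc
      simp only [mem_filter, mem_univ, true_and] at hc
      exact ⟨σ c, by simp only [mem_filter, mem_univ, true_and, h]; exact hc, h c⟩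
  have hsplit : Nst σ = Fst σ + (univ.filter fun i : Fin k => i < σ i).card := by
    rw [Nst, Fst, ← Finset.card_union_of_disjoint, ← Finset.filter_or]
    · congr 1
      ext i
      simp only [mem_filter, mem_univ, true_and]
      constructor
      · intro hle
        rcases eq_or_lt_of_le hle with h' | h'
        · exact Or.inl h'.symm
        · exact Or.inr h'
      · rintro (h' | h')
        · exact le_of_eq h'.symm
        · exact le_of_lt h'
    · rw [Finset.disjoint_filter]
      intro i _ h1 h2
      exact absurd h1 (ne_of_gt h2)
  have htot : Nst σ + (univ.filter fun i : Fin k => σ i < i).card = k := by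
    have := Finset.card_filter_add_card_filter_not (s := (univ : Finset (Fin k)))
      (p := fun i => i ≤ σ i)
    rw [Finset.card_univ, Fintype.card_fin] at this
    have h2 : (univ.filter fun i : Fin k => σ i < i).card
        = (univ.filter fun i : Fin k => ¬ i ≤ σ i).card := by
      congr 1
      ext i
      simp [not_le]
    rw [Nst, h2]
    exact this
  omega

private lemma Fst_conj {k : ℕ} (τ e : Equiv.Perm (Fin k)) :
    Fst (τ * e * τ⁻¹) = Fst e := by
  unfold Fst
  apply Finset.card_bij (fun i _ => τ⁻¹ i)
  · intro i hi
    simp only [mem_filter, mem_univ, true_and, Equiv.Perm.mul_apply] at hi ⊢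
    exact τ.injective (by rw [(Finset.mem_filter.mp hi).2, Equiv.Perm.coe_inv, Equiv.apply_symm_apply])
  · intro i _ j _ hij; exact τ⁻¹.injective hij
  · intro c hc
    simp only [mem_filter, mem_univ, true_and, Equiv.Perm.mul_apply] at hc
    exact ⟨τ c, Finset.mem_filter.mpr ⟨Finset.mem_univ _, by simp only [mem_filter, mem_univ, true_and, Equiv.Perm.mul_apply,
      Equiv.Perm.coe_inv, Equiv.symm_apply_apply, hc]⟩, by simp⟩

private lemma conj_invol {k : ℕ} (τ e : Equiv.Perm (Fin k)) :
    (∀ x, (τ * e * τ⁻¹) ((τ * e * τ⁻¹) x) = x) ↔ (∀ x, e (e x) = x) := by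
  have happ : ∀ x, (τ * e * τ⁻¹) ((τ * e * τ⁻¹) x) = τ (e (e (τ⁻¹ x))) := by
    intro x
    simp [Equiv.Perm.mul_apply]
  constructor
  · intro h x
    have := h (τ x)
    rw [happ, Equiv.Perm.coe_inv, Equiv.symm_apply_apply] at this
    exact τ.injective (by rw [this])
  · intro h x
    rw [happ, h, Equiv.Perm.coe_inv, Equiv.apply_symm_apply]

private lemma Nst_conj {k : ℕ} (τ e : Equiv.Perm (Fin k)) (he : ∀ x, e (e x) = x) :
    Nst (τ * e * τ⁻¹) = Nst e := by
  have h1 := two_mul_Nst e he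
  have h2 := two_mul_Nst (τ * e * τ⁻¹) ((conj_invol τ e).mpr he)
  rw [Fst_conj] at h2
  omega

private lemma invol_iff {k : ℕ} (σ : Equiv.Perm (Fin k)) :
    ⇑σ ∘ ⇑σ = id ↔ ∀ i, σ (σ i) = i := by
  rw [funext_iff]
  simp [Function.comp]

section zero
variable {m : ℕ} (e : Equiv.Perm (Fin m))

private lemma zsucc (x : Fin m) :
    Equiv.Perm.decomposeFin.symm ((0 : Fin (m+1)), e) x.succ = (e x).succ := by
  rw [Equiv.Perm.decomposeFin_symm_apply_succ, Equiv.swap_self, Equiv.refl_apply]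

private lemma z_invol :
    (∀ i, Equiv.Perm.decomposeFin.symm ((0 : Fin (m+1)), e)
        (Equiv.Perm.decomposeFin.symm ((0 : Fin (m+1)), e) i) = i) ↔ ∀ x, e (e x) = x := by
  constructor
  · intro h x
    have := h x.succ
    rw [zsucc, zsucc] at this
    exact Fin.succ_injective _ this
  · intro h i
    induction i using Fin.cases with
    | zero => rw [Equiv.Perm.decomposeFin_symm_apply_zero, Equiv.Perm.decomposeFin_symm_apply_zero]
    | succ x => rw [zsucc, zsucc, h]

private lemma z_Nst :
    Nst (Equiv.Perm.decomposeFin.symm ((0 : Fin (m+1)), e)) = Nst e + 1 := by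
  rw [Nst_eq_sum, Nst_eq_sum, Fin.sum_univ_succ,
    Equiv.Perm.decomposeFin_symm_apply_zero]
  simp only [le_refl, if_true]
  rw [add_comm]
  congr 1
  apply Finset.sum_congr rfl
  intro x _
  rw [zsucc]
  congr 1
  simp [Fin.succ_le_succ_iff]
end zero

section succ
variable {m : ℕ} (q : Fin (m+1)) (e : Equiv.Perm (Fin (m+1)))

private lemma ssucc (x : Fin (m+1)) :
    Equiv.Perm.decomposeFin.symm (q.succ, e) x.succ
      = if e x = q then 0 else (e x).succ := by
  rw [Equiv.Perm.decomposeFin_symm_apply_succ]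
  split
  · rename_i h; rw [h, Equiv.swap_apply_right]
  · rename_i h
    exact Equiv.swap_apply_of_ne_of_ne (Fin.succ_ne_zero _)
      (fun hc => h (Fin.succ_injective _ hc))

private lemma s_invol :
    (∀ i, Equiv.Perm.decomposeFin.symm (q.succ, e)
        (Equiv.Perm.decomposeFin.symm (q.succ, e) i) = i)
      ↔ ((∀ x, e (e x) = x) ∧ e q = q) := by
  constructor
  · intro h
    have hq : e q = q := by
      have h0 := h 0
      rw [Equiv.Perm.decomposeFin_symm_apply_zero, ssucc] at h0
      by_contra hne
      rw [if_neg hne] at h0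
      exact Fin.succ_ne_zero _ h0
    refine ⟨?_, hq⟩
    intro x
    have hx := h x.succ
    rw [ssucc] at hx
    by_cases hc : e x = q
    · rw [if_pos hc, Equiv.Perm.decomposeFin_symm_apply_zero] at hx
      have : q = x := Fin.succ_injective _ hx
      rw [hc, hq, this]
    · rw [if_neg hc, ssucc] at hx
      by_cases hc2 : e (e x) = q
      · rw [if_pos hc2] at hx
        exact absurd hx.symm (Fin.succ_ne_zero _)
      · rw [if_neg hc2] at hx
        exact Fin.succ_injective _ hx
  · rintro ⟨he, hq⟩ i
    induction i using Fin.cases with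
    | zero =>
      rw [Equiv.Perm.decomposeFin_symm_apply_zero, ssucc, if_pos hq]
    | succ x =>
      rw [ssucc]
      by_cases hc : e x = q
      · have hxq : x = q := by rw [← he x, hc, hq]
        rw [if_pos hc, Equiv.Perm.decomposeFin_symm_apply_zero, hxq]
      · rw [if_neg hc, ssucc, he]
        have : x ≠ q := fun hxq => hc (by rw [hxq, hq])
        rw [if_neg this]

private lemma s_Fst (he : ∀ x, e (e x) = x) (hq : e q = q) :
    Fst e = Fst (Equiv.Perm.decomposeFin.symm (q.succ, e)) + 1 := by
  rw [Fst_eq_sum, Fst_eq_sum, Fin.sum_univ_succ (n := m+1),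
    Equiv.Perm.decomposeFin_symm_apply_zero]
  rw [if_neg (Fin.succ_ne_zero q)]
  have hterm : ∀ x : Fin (m+1),
      (if Equiv.Perm.decomposeFin.symm (q.succ, e) x.succ = x.succ then 1 else 0)
        = if e x = x ∧ x ≠ q then (1:ℕ) else 0 := by
    intro x
    rw [ssucc]
    by_cases hc : e x = q
    · have hxq : x = q := by rw [← he x, hc, hq]
      rw [if_pos hc, if_neg (Fin.succ_ne_zero x).symm, if_neg (by simp [hxq])]
    · rw [if_neg hc]
      by_cases hfix : e x = x
      · have hxq : x ≠ q := fun h => hc (h ▸ hfix)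
        rw [if_pos (by rw [hfix]), if_pos ⟨hfix, hxq⟩]
      · rw [if_neg (fun h => hfix (Fin.succ_injective _ h)), if_neg (by tauto)]
  rw [Finset.sum_congr rfl (fun x _ => hterm x)]
  rw [← Finset.add_sum_erase _ _ (Finset.mem_univ q),
    ← Finset.add_sum_erase _ (fun x => if e x = x ∧ x ≠ q then (1:ℕ) else 0) (Finset.mem_univ q)]
  rw [if_pos hq, if_neg (by simp)]
  have hsame : (∑ x ∈ univ.erase q, if e x = x then (1:ℕ) else 0)
      = ∑ x ∈ univ.erase q, if e x = x ∧ x ≠ q then (1:ℕ) else 0 := by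
    apply Finset.sum_congr rfl
    intro x hx
    simp [Finset.ne_of_mem_erase hx]
  rw [hsame]
  omega

private lemma s_Nst (he : ∀ x, e (e x) = x) (hq : e q = q) :
    Nst (Equiv.Perm.decomposeFin.symm (q.succ, e)) = Nst e := by
  have h1 := two_mul_Nst e he
  have h2 := two_mul_Nst (Equiv.Perm.decomposeFin.symm (q.succ, e))
    ((s_invol q e).mpr ⟨he, hq⟩)
  have h3 := s_Fst q e he hq
  omega
end succ

private lemma conj_sum {m : ℕ} (a : ℂ) (q : Fin (m+1)) :
    (∑ e : Equiv.Perm (Fin (m+1)),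
        if ((∀ x, e (e x) = x) ∧ e q = q) then a ^ Nst e else 0)
      = ∑ e : Equiv.Perm (Fin (m+1)),
        if ((∀ x, e (e x) = x) ∧ e 0 = 0) then a ^ Nst e else 0 := by
  set τ : Equiv.Perm (Fin (m+1)) := Equiv.swap 0 q with hτ
  have key : ∀ e : Equiv.Perm (Fin (m+1)),
      (if ((∀ x, (τ * e * τ⁻¹) ((τ * e * τ⁻¹) x) = x) ∧ (τ * e * τ⁻¹) q = q)
          then a ^ Nst (τ * e * τ⁻¹) else 0)
        = if ((∀ x, e (e x) = x) ∧ e 0 = 0) then a ^ Nst e else 0 := by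
    intro e
    have hfix : (τ * e * τ⁻¹) q = q ↔ e 0 = 0 := by
      have h1 : τ⁻¹ q = 0 := by
        rw [hτ, Equiv.swap_inv, Equiv.swap_apply_right]
      constructor
      · intro h
        have := h
        rw [Equiv.Perm.mul_apply, Equiv.Perm.mul_apply, h1] at this
        have : e 0 = τ⁻¹ q := τ.injective (by rw [Equiv.Perm.coe_inv, Equiv.apply_symm_apply, this])
        rwa [h1] at this
      · intro h
        rw [Equiv.Perm.mul_apply, Equiv.Perm.mul_apply, h1, h, ← h1,
          Equiv.Perm.coe_inv, Equiv.apply_symm_apply]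
    by_cases hc : (∀ x, e (e x) = x) ∧ e 0 = 0
    · rw [if_pos hc, if_pos ⟨(conj_invol τ e).mpr hc.1, hfix.mpr hc.2⟩,
        Nst_conj τ e hc.1]
    · rw [if_neg hc, if_neg (fun hh => hc ⟨(conj_invol τ e).mp hh.1, hfix.mp hh.2⟩)]
  calc (∑ e : Equiv.Perm (Fin (m+1)),
        if ((∀ x, e (e x) = x) ∧ e q = q) then a ^ Nst e else 0)
      = ∑ e : Equiv.Perm (Fin (m+1)),
        if ((∀ x, (τ * e * τ⁻¹) ((τ * e * τ⁻¹) x) = x) ∧ (τ * e * τ⁻¹) q = q)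
          then a ^ Nst (τ * e * τ⁻¹) else 0 := by
        rw [← Equiv.sum_comp ((MulAut.conj τ).toEquiv)
          (fun e => if ((∀ x, e (e x) = x) ∧ e q = q) then a ^ Nst e else 0)]
        rfl
    _ = _ := Finset.sum_congr rfl (fun e _ => key e)

private lemma zero_sum {m : ℕ} (a : ℂ) :
    (∑ e : Equiv.Perm (Fin (m+1)),
        if ((∀ x, e (e x) = x) ∧ e 0 = 0) then a ^ Nst e else 0)
      = a * ∑ e' : Equiv.Perm (Fin m),
          if (∀ x, e' (e' x) = x) then a ^ Nst e' else 0 := by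
  rw [← Equiv.sum_comp (Equiv.Perm.decomposeFin (n := m)).symm
    (fun e => if ((∀ x, e (e x) = x) ∧ e 0 = 0) then a ^ Nst e else 0),
    Fintype.sum_prod_type, Fin.sum_univ_succ]
  have h1 : ∀ e' : Equiv.Perm (Fin m),
      (if ((∀ x, Equiv.Perm.decomposeFin.symm ((0 : Fin (m+1)), e')
            (Equiv.Perm.decomposeFin.symm ((0 : Fin (m+1)), e') x) = x)
          ∧ Equiv.Perm.decomposeFin.symm ((0 : Fin (m+1)), e') 0 = 0)
        then a ^ Nst (Equiv.Perm.decomposeFin.symm ((0 : Fin (m+1)), e')) else 0)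
      = if (∀ x, e' (e' x) = x) then a * a ^ Nst e' else 0 := by
    intro e'
    rw [z_Nst]
    by_cases hc : ∀ x, e' (e' x) = x
    · rw [if_pos ⟨(z_invol e').mpr hc, Equiv.Perm.decomposeFin_symm_apply_zero 0 e'⟩,
        if_pos hc, pow_succ, mul_comm]
    · rw [if_neg (fun hh => hc ((z_invol e').mp hh.1)), if_neg hc]
  have h2 : ∀ q : Fin m, ∀ e' : Equiv.Perm (Fin m),
      (if ((∀ x, Equiv.Perm.decomposeFin.symm (q.succ, e')
            (Equiv.Perm.decomposeFin.symm (q.succ, e') x) = x)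
          ∧ Equiv.Perm.decomposeFin.symm (q.succ, e') 0 = 0)
        then a ^ Nst (Equiv.Perm.decomposeFin.symm (q.succ, e')) else 0) = 0 := by
    intro q e'
    rw [if_neg]
    rintro ⟨-, h0⟩
    rw [Equiv.Perm.decomposeFin_symm_apply_zero] at h0
    exact Fin.succ_ne_zero q h0
  rw [Finset.sum_congr rfl (fun e' _ => h1 e')]
  have : (∑ q : Fin m, ∑ e' : Equiv.Perm (Fin m),
      if ((∀ x, Equiv.Perm.decomposeFin.symm (q.succ, e')
            (Equiv.Perm.decomposeFin.symm (q.succ, e') x) = x)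
          ∧ Equiv.Perm.decomposeFin.symm (q.succ, e') 0 = 0)
        then a ^ Nst (Equiv.Perm.decomposeFin.symm (q.succ, e')) else 0) = 0 := by
    apply Finset.sum_eq_zero
    intro q _
    apply Finset.sum_eq_zero
    intro e' _
    exact h2 q e'
  rw [this, add_zero, Finset.mul_sum]
  apply Finset.sum_congr rfl
  intro e' _
  rw [mul_ite, mul_zero]

private lemma key_rec (a : ℂ) (n : ℕ) :
    (∑ σ : Equiv.Perm (Fin (n+2)), if (∀ i, σ (σ i) = i) then a ^ Nst σ else 0)
      = a * ((∑ e : Equiv.Perm (Fin (n+1)), if (∀ i, e (e i) = i) then a ^ Nst e else 0)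
          + ((n+1 : ℕ) : ℂ) *
            ∑ e : Equiv.Perm (Fin n), if (∀ i, e (e i) = i) then a ^ Nst e else 0) := by
  rw [← Equiv.sum_comp (Equiv.Perm.decomposeFin (n := n+1)).symm
    (fun σ => if (∀ i, σ (σ i) = i) then a ^ Nst σ else 0),
    Fintype.sum_prod_type, Fin.sum_univ_succ]
  have h1 : (∑ e : Equiv.Perm (Fin (n+1)),
      if (∀ i, Equiv.Perm.decomposeFin.symm ((0 : Fin (n+2)), e)
          (Equiv.Perm.decomposeFin.symm ((0 : Fin (n+2)), e) i) = i)
        then a ^ Nst (Equiv.Perm.decomposeFin.symm ((0 : Fin (n+2)), e)) else 0)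
      = a * ∑ e : Equiv.Perm (Fin (n+1)), if (∀ i, e (e i) = i) then a ^ Nst e else 0 := by
    rw [Finset.mul_sum]
    apply Finset.sum_congr rfl
    intro e _
    rw [z_Nst]
    by_cases hc : ∀ x, e (e x) = x
    · rw [if_pos ((z_invol e).mpr hc), mul_ite, mul_zero, if_pos hc, pow_succ]
      ring
    · rw [if_neg (fun hh => hc ((z_invol e).mp hh)), mul_ite, mul_zero, if_neg hc]
  have h2 : ∀ q : Fin (n+1), (∑ e : Equiv.Perm (Fin (n+1)),
      if (∀ i, Equiv.Perm.decomposeFin.symm (q.succ, e)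
          (Equiv.Perm.decomposeFin.symm (q.succ, e) i) = i)
        then a ^ Nst (Equiv.Perm.decomposeFin.symm (q.succ, e)) else 0)
      = a * ∑ e : Equiv.Perm (Fin n), if (∀ i, e (e i) = i) then a ^ Nst e else 0 := by
    intro q
    have step1 : ∀ e : Equiv.Perm (Fin (n+1)),
        (if (∀ i, Equiv.Perm.decomposeFin.symm (q.succ, e)
            (Equiv.Perm.decomposeFin.symm (q.succ, e) i) = i)
          then a ^ Nst (Equiv.Perm.decomposeFin.symm (q.succ, e)) else 0)
        = if ((∀ x, e (e x) = x) ∧ e q = q) then a ^ Nst e else 0 := by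
      intro e
      by_cases hc : (∀ x, e (e x) = x) ∧ e q = q
      · rw [if_pos ((s_invol q e).mpr hc), if_pos hc, s_Nst q e hc.1 hc.2]
      · rw [if_neg (fun hh => hc ((s_invol q e).mp hh)), if_neg hc]
    rw [Finset.sum_congr rfl (fun e _ => step1 e), conj_sum, zero_sum]
  rw [h1, Finset.sum_congr rfl (fun q (_ : q ∈ univ) => h2 q), Finset.sum_const,
    Finset.card_univ, Fintype.card_fin]
  rw [nsmul_eq_mul]
  push_cast
  ring

/-- recursion for the loop hafnian `T_k(a)` of the constant `k × k`
matrix with all entries equal to `a`, where `T_k(a)` is the sum over involutive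
permutations `σ` of `Fin k` of `a` raised to the number of `i` with `i ≤ σ i`. -/
theorem stmt_2 (a : ℂ) (T : ℕ → ℂ)
    (hT : ∀ k, T k =
      ∑ σ ∈ Finset.univ.filter (fun σ : Equiv.Perm (Fin k) => ⇑σ ∘ ⇑σ = id),
        a ^ (Finset.univ.filter fun i => i ≤ σ i).card) :
    T 0 = 1 ∧ T 1 = a ∧
      ∀ k, 2 ≤ k → T k = a * (T (k - 1) + ((k - 1 : ℕ) : ℂ) * T (k - 2)) := by
  have hT' : ∀ k, T k = ∑ σ : Equiv.Perm (Fin k),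
      if (∀ i, σ (σ i) = i) then a ^ Nst σ else 0 := by
    intro k
    rw [hT k, Finset.sum_filter]
    apply Finset.sum_congr rfl
    intro σ _
    exact if_congr (invol_iff σ) rfl rfl
  refine ⟨?_, ?_, ?_⟩
  · rw [hT 0]
    have : (fun σ : Equiv.Perm (Fin 0) => ⇑σ ∘ ⇑σ = id) 1 := by ext i; exact i.elim0
    simp [Finset.sum_filter, Finset.filter_singleton, this]
  · rw [hT 1]
    have h1 : (fun σ : Equiv.Perm (Fin 1) => ⇑σ ∘ ⇑σ = id) 1 := by
      funext i
      simp
    have h2 : (Finset.univ.filter fun i : Fin 1 => i ≤ (1 : Equiv.Perm (Fin 1)) i).card = 1 := by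
      decide
    simp [Finset.sum_filter, Finset.filter_singleton, h1, h2]
  · intro k hk
    obtain ⟨n, rfl⟩ : ∃ n, k = n + 2 := ⟨k - 2, by omega⟩
    have hk1 : n + 2 - 1 = n + 1 := by omega
    have hk2 : n + 2 - 2 = n := by omega
    rw [hk1, hk2, hT' (n+2), hT' (n+1), hT' n, key_rec a n]
end

section
/- Let U : ℕ → ℕ → ℂ be a matrix, let D, Y ⊆ ℕ be finite sets, and let R, C ⊆ ℕ. Then Σ (−1)^{|D'|} · per_U(D', Y') · per_U(D \ D', Y \ Y') = Σ_π ∏_{a ∈ D} U(a, π(a)), where the left sum is over all pairs (D', Y') with D' ⊆ D ∩ R and Y' ⊆ Y ∩ C, and the right sum is over all bijections π : D → Y such that there is no a ∈ D with a ∈ R and π(a) ∈ C. -/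
/-- The partial permanent of `U` over finite sets `D, Y ⊆ ℕ`: the sum over all
bijections `e : D → Y` of `∏_{a ∈ D} U a (e a)` (zero when `|D| ≠ |Y|`). -/
noncomputable def pper (U : ℕ → ℕ → ℂ) (D Y : Finset ℕ) : ℂ :=
  ∑ e : {x // x ∈ D} ≃ {y // y ∈ Y}, ∏ a : {x // x ∈ D}, U (a : ℕ) ((e a : ℕ))

open Finset

variable {D' D : Finset ℕ}

def splitE (h : D' ⊆ D) : {x // x ∈ D} ≃ {x // x ∈ D'} ⊕ {x // x ∈ D \ D'} :=
  (Equiv.subtypeEquivRight (q := fun x => x ∈ D' ∨ x ∈ D \ D') (fun x => by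
      simp only [Finset.mem_sdiff]
      constructor
      · intro hx; by_cases hx' : x ∈ D'
        · exact Or.inl hx'
        · exact Or.inr ⟨hx, hx'⟩
      · rintro (hx | hx); exacts [h hx, hx.1])).trans
    (subtypeOrEquiv _ _ (by
      intro s hs1 hs2 x hx
      exact absurd (Finset.mem_sdiff.mp (hs2 x hx)).2 (fun hh => hh (hs1 x hx))))

@[simp] lemma splitE_symm_inl (h : D' ⊆ D) (b : {x // x ∈ D'}) :
    ((splitE h).symm (Sum.inl b) : ℕ) = (b : ℕ) := rfl

@[simp] lemma splitE_symm_inr (h : D' ⊆ D) (b : {x // x ∈ D \ D'}) :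
    ((splitE h).symm (Sum.inr b) : ℕ) = (b : ℕ) := rfl

lemma splitE_apply_mem (h : D' ⊆ D) (a : {x // x ∈ D}) (ha : (a : ℕ) ∈ D') :
    splitE h a = Sum.inl ⟨(a : ℕ), ha⟩ := by
  simp only [splitE, Equiv.trans_apply, subtypeOrEquiv_apply]
  show subtypeOrLeftEmbedding (Membership.mem D') (Membership.mem (D \ D')) _ = _
  rw [subtypeOrLeftEmbedding_apply_left]
  exact rfl

lemma splitE_apply_not_mem (h : D' ⊆ D) (a : {x // x ∈ D}) (ha : (a : ℕ) ∉ D') :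
    splitE h a = Sum.inr ⟨(a : ℕ), Finset.mem_sdiff.mpr ⟨a.2, ha⟩⟩ := by
  simp only [splitE, Equiv.trans_apply, subtypeOrEquiv_apply]
  show subtypeOrLeftEmbedding (Membership.mem D') (Membership.mem (D \ D')) _ = _
  rw [subtypeOrLeftEmbedding_apply_right]
  · exact rfl
  · exact ha

variable {Y' Y : Finset ℕ}

def glue (hD : D' ⊆ D) (hY : Y' ⊆ Y) (e1 : {x // x ∈ D'} ≃ {y // y ∈ Y'})
    (e2 : {x // x ∈ D \ D'} ≃ {y // y ∈ Y \ Y'}) : {x // x ∈ D} ≃ {y // y ∈ Y} :=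
  (splitE hD).trans ((e1.sumCongr e2).trans (splitE hY).symm)

lemma glue_apply_mem (hD : D' ⊆ D) (hY : Y' ⊆ Y) (e1 : {x // x ∈ D'} ≃ {y // y ∈ Y'})
    (e2 : {x // x ∈ D \ D'} ≃ {y // y ∈ Y \ Y'}) (a : {x // x ∈ D}) (ha : (a : ℕ) ∈ D') :
    ((glue hD hY e1 e2) a : ℕ) = ((e1 ⟨a, ha⟩ : {y // y ∈ Y'}) : ℕ) := by
  simp [glue, splitE_apply_mem hD a ha]

lemma glue_apply_not_mem (hD : D' ⊆ D) (hY : Y' ⊆ Y) (e1 : {x // x ∈ D'} ≃ {y // y ∈ Y'})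
    (e2 : {x // x ∈ D \ D'} ≃ {y // y ∈ Y \ Y'}) (a : {x // x ∈ D}) (ha : (a : ℕ) ∉ D') :
    ((glue hD hY e1 e2) a : ℕ)
      = ((e2 ⟨a, Finset.mem_sdiff.mpr ⟨a.2, ha⟩⟩ : {y // y ∈ Y \ Y'}) : ℕ) := by
  simp [glue, splitE_apply_not_mem hD a ha]

lemma glue_mem_iff (hD : D' ⊆ D) (hY : Y' ⊆ Y) (e1 : {x // x ∈ D'} ≃ {y // y ∈ Y'})
    (e2 : {x // x ∈ D \ D'} ≃ {y // y ∈ Y \ Y'}) (a : {x // x ∈ D}) :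
    ((glue hD hY e1 e2) a : ℕ) ∈ Y' ↔ (a : ℕ) ∈ D' := by
  by_cases ha : (a : ℕ) ∈ D'
  · simp only [glue_apply_mem hD hY e1 e2 a ha, ha, iff_true]
    exact (e1 ⟨a, ha⟩).2
  · simp only [glue_apply_not_mem hD hY e1 e2 a ha, ha, iff_false]
    exact (Finset.mem_sdiff.mp (e2 ⟨a, Finset.mem_sdiff.mpr ⟨a.2, ha⟩⟩).2).2

lemma glue_prod (U : ℕ → ℕ → ℂ) (hD : D' ⊆ D) (hY : Y' ⊆ Y)
    (e1 : {x // x ∈ D'} ≃ {y // y ∈ Y'}) (e2 : {x // x ∈ D \ D'} ≃ {y // y ∈ Y \ Y'}) :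
    (∏ a : {x // x ∈ D}, U (a : ℕ) (((glue hD hY e1 e2) a : ℕ)))
      = (∏ a : {x // x ∈ D'}, U (a : ℕ) ((e1 a : ℕ)))
        * (∏ a : {x // x ∈ D \ D'}, U (a : ℕ) ((e2 a : ℕ))) := by
  rw [Fintype.prod_equiv (splitE hD)
    (fun a => U (a : ℕ) (((glue hD hY e1 e2) a : ℕ)))
    (Sum.elim (fun b : {x // x ∈ D'} => U (b : ℕ) ((e1 b : ℕ)))
      (fun b : {x // x ∈ D \ D'} => U (b : ℕ) ((e2 b : ℕ))))
    (fun a => by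
      by_cases ha : (a : ℕ) ∈ D'
      · rw [splitE_apply_mem hD a ha]
        simp only [Sum.elim_inl, glue_apply_mem hD hY e1 e2 a ha]
      · rw [splitE_apply_not_mem hD a ha]
        simp only [Sum.elim_inr, glue_apply_not_mem hD hY e1 e2 a ha])]
  rw [Fintype.prod_sum_type]
  rfl

def restrE {A B : Finset ℕ} (hA : A ⊆ D) (hB : B ⊆ Y) (e : {x // x ∈ D} ≃ {y // y ∈ Y})
    (he : ∀ a : {x // x ∈ D}, ((a : ℕ) ∈ A ↔ ((e a : ℕ)) ∈ B)) :
    {x // x ∈ A} ≃ {y // y ∈ B} where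
  toFun b := ⟨(e ⟨b.1, hA b.2⟩ : ℕ), (he _).mp b.2⟩
  invFun y := ⟨(e.symm ⟨y.1, hB y.2⟩ : ℕ), (he _).mpr (by rw [Equiv.apply_symm_apply]; exact y.2)⟩
  left_inv b := by apply Subtype.ext; simp
  right_inv y := by apply Subtype.ext; simp

@[simp] lemma restrE_coe {A B : Finset ℕ} (hA : A ⊆ D) (hB : B ⊆ Y)
    (e : {x // x ∈ D} ≃ {y // y ∈ Y})
    (he : ∀ a : {x // x ∈ D}, ((a : ℕ) ∈ A ↔ ((e a : ℕ)) ∈ B)) (b : {x // x ∈ A}) :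
    ((restrE hA hB e he b : {y // y ∈ B}) : ℕ) = ((e ⟨b.1, hA b.2⟩ : {y // y ∈ Y}) : ℕ) := rfl


lemma lemA_s5 (U : ℕ → ℕ → ℂ) (hD : D' ⊆ D) (hY : Y' ⊆ Y) :
    pper U D' Y' * pper U (D \ D') (Y \ Y')
      = ∑ e ∈ Finset.univ.filter
          (fun e : {x // x ∈ D} ≃ {y // y ∈ Y} =>
            ∀ a : {x // x ∈ D}, ((a : ℕ) ∈ D' ↔ ((e a : ℕ)) ∈ Y')),
        ∏ a : {x // x ∈ D}, U (a : ℕ) ((e a : ℕ)) := by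
  rw [pper, pper, Finset.sum_mul_sum, ← Finset.sum_product']
  refine Finset.sum_bij'
    (i := fun p _ => glue hD hY p.1 p.2)
    (j := fun e he =>
      (restrE hD hY e (Finset.mem_filter.mp he).2,
       restrE Finset.sdiff_subset Finset.sdiff_subset e (fun a => by
         have h := (Finset.mem_filter.mp he).2 a
         simp only [Finset.mem_sdiff, a.2, (e a).2, true_and]
         exact not_congr h)))
    ?_ ?_ ?_ ?_ ?_
  · intro p _
    rw [Finset.mem_filter]
    exact ⟨Finset.mem_univ _, fun a => (glue_mem_iff hD hY p.1 p.2 a).symm⟩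
  · intro e he
    exact Finset.mem_univ _
  · intro p hp
    ext b
    · simp only [restrE_coe]
      rw [glue_apply_mem hD hY p.1 p.2 ⟨b.1, hD b.2⟩ b.2]
    · simp only [restrE_coe]
      rw [glue_apply_not_mem hD hY p.1 p.2 ⟨b.1, Finset.sdiff_subset b.2⟩
          (Finset.mem_sdiff.mp b.2).2]
  · intro e he
    apply Equiv.ext
    intro a
    apply Subtype.ext
    by_cases ha : (a : ℕ) ∈ D'
    · rw [glue_apply_mem _ _ _ _ a ha, restrE_coe]
    · rw [glue_apply_not_mem _ _ _ _ a ha, restrE_coe]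
  · intro p hp
    exact (glue_prod U hD hY p.1 p.2).symm

lemma lemB_s5 (R C : Set ℕ) [DecidablePred (· ∈ R)] [DecidablePred (· ∈ C)]
    (e : {x // x ∈ D} ≃ {y // y ∈ Y}) :
    (∑ D' ∈ (D.filter (· ∈ R)).powerset, ∑ Y' ∈ (Y.filter (· ∈ C)).powerset,
        (if (∀ a : {x // x ∈ D}, ((a : ℕ) ∈ D' ↔ ((e a : ℕ)) ∈ Y')) then
          (-1 : ℂ) ^ D'.card else 0))
      = if (∀ a : {x // x ∈ D}, ¬((a : ℕ) ∈ R ∧ ((e a : ℕ)) ∈ C)) then 1 else 0 := by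
  classical
  set Bad : Finset ℕ :=
    Finset.image Subtype.val
      (Finset.univ.filter fun a : {x // x ∈ D} => (a : ℕ) ∈ R ∧ ((e a : ℕ)) ∈ C) with hBad
  have key : (∑ D' ∈ (D.filter (· ∈ R)).powerset, ∑ Y' ∈ (Y.filter (· ∈ C)).powerset,
        (if (∀ a : {x // x ∈ D}, ((a : ℕ) ∈ D' ↔ ((e a : ℕ)) ∈ Y')) then
          (-1 : ℂ) ^ D'.card else 0))
      = ∑ D'' ∈ Bad.powerset, (-1 : ℂ) ^ D''.card := by
    rw [← Finset.sum_product']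
    rw [← Finset.sum_filter]
    refine Finset.sum_bij'
      (i := fun p _ => p.1)
      (j := fun D'' _ =>
        (D'', Finset.image (fun a : {x // x ∈ D} => ((e a : ℕ)))
          (Finset.univ.filter (fun a : {x // x ∈ D} => (a : ℕ) ∈ D''))))
      ?_ ?_ ?_ ?_ ?_
    · -- hi : p.1 ∈ Bad.powerset
      rintro ⟨D', Y'⟩ hp
      rw [Finset.mem_filter, Finset.mem_product, Finset.mem_powerset, Finset.mem_powerset] at hp
      obtain ⟨⟨hD', hY'⟩, hcond⟩ := hp
      rw [Finset.mem_powerset]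
      intro x hx
      have hxD : x ∈ D := (Finset.mem_filter.mp (hD' hx)).1
      have hxR : x ∈ R := (Finset.mem_filter.mp (hD' hx)).2
      have hxC : ((e ⟨x, hxD⟩ : ℕ)) ∈ C :=
        (Finset.mem_filter.mp (hY' ((hcond ⟨x, hxD⟩).mp hx))).2
      rw [hBad, Finset.mem_image]
      exact ⟨⟨x, hxD⟩, Finset.mem_filter.mpr ⟨Finset.mem_univ _, hxR, hxC⟩, rfl⟩
    · -- hj
      intro D'' hD''
      rw [Finset.mem_powerset] at hD''
      rw [Finset.mem_filter, Finset.mem_product, Finset.mem_powerset, Finset.mem_powerset]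
      have hBadR : ∀ x ∈ D'', x ∈ D ∧ x ∈ R ∧ ∀ hx : x ∈ D, ((e ⟨x, hx⟩ : ℕ)) ∈ C := by
        intro x hx
        have := hD'' hx
        rw [hBad, Finset.mem_image] at this
        obtain ⟨a, ha, rfl⟩ := this
        rw [Finset.mem_filter] at ha
        exact ⟨a.2, ha.2.1, fun hx => by rw [show (⟨(a : ℕ), hx⟩ : {x // x ∈ D}) = a from rfl]; exact ha.2.2⟩
      refine ⟨⟨?_, ?_⟩, ?_⟩
      · intro x hx
        obtain ⟨h1, h2, _⟩ := hBadR x hx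
        exact Finset.mem_filter.mpr ⟨h1, h2⟩
      · intro y hy
        rw [Finset.mem_image] at hy
        obtain ⟨a, ha, rfl⟩ := hy
        rw [Finset.mem_filter] at ha
        obtain ⟨_, _, h3⟩ := hBadR _ ha.2
        exact Finset.mem_filter.mpr ⟨(e a).2, by simpa using h3 a.2⟩
      · intro a
        constructor
        · intro ha
          rw [Finset.mem_image]
          exact ⟨a, Finset.mem_filter.mpr ⟨Finset.mem_univ _, ha⟩, rfl⟩
        · intro ha
          rw [Finset.mem_image] at ha
          obtain ⟨b, hb, hval⟩ := ha
          have : a = b := e.injective (Subtype.ext hval.symm)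
          rw [this]
          exact (Finset.mem_filter.mp hb).2
    · -- left inverse
      rintro ⟨D', Y'⟩ hp
      rw [Finset.mem_filter, Finset.mem_product, Finset.mem_powerset, Finset.mem_powerset] at hp
      obtain ⟨⟨hD', hY'⟩, hcond⟩ := hp
      simp only [Prod.mk.injEq, true_and]
      ext y
      rw [Finset.mem_image]
      constructor
      · rintro ⟨a, ha, rfl⟩
        exact (hcond a).mp (Finset.mem_filter.mp ha).2
      · intro hy
        have hyY : y ∈ Y := (Finset.mem_filter.mp (hY' hy)).1
        refine ⟨e.symm ⟨y, hyY⟩, Finset.mem_filter.mpr ⟨Finset.mem_univ _, ?_⟩, by simp⟩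
        apply (hcond (e.symm ⟨y, hyY⟩)).mpr
        simpa using hy
    · intro D'' _
      rfl
    · intro p _
      rfl
  rw [key]
  have := @Finset.sum_powerset_neg_one_pow_card ℕ _ Bad
  have hcast : (∑ D'' ∈ Bad.powerset, (-1 : ℂ) ^ D''.card)
      = ((∑ D'' ∈ Bad.powerset, (-1 : ℤ) ^ D''.card : ℤ) : ℂ) := by
    push_cast
    rfl
  rw [hcast, this]
  have hiff : Bad = ∅ ↔ ∀ a : {x // x ∈ D}, ¬((a : ℕ) ∈ R ∧ ((e a : ℕ)) ∈ C) := by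
    rw [hBad, Finset.image_eq_empty, Finset.filter_eq_empty_iff]
    simp
  by_cases hb : Bad = ∅
  · rw [if_pos hb, if_pos (hiff.mp hb)]; norm_num
  · rw [if_neg hb, if_neg (fun h => hb (hiff.mpr h))]; norm_num


/-- inclusion–exclusion identity for the sum over bijections `π : D → Y`
avoiding all pairs `(a, π a) ∈ R × C`. -/
theorem stmt_5 (U : ℕ → ℕ → ℂ) (D Y : Finset ℕ) (R C : Set ℕ)
    [DecidablePred (· ∈ R)] [DecidablePred (· ∈ C)] :
    (∑ D' ∈ (D.filter (· ∈ R)).powerset, ∑ Y' ∈ (Y.filter (· ∈ C)).powerset,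
        (-1 : ℂ) ^ D'.card * pper U D' Y' * pper U (D \ D') (Y \ Y')) =
      ∑ e ∈ Finset.univ.filter
          (fun e : {x // x ∈ D} ≃ {y // y ∈ Y} =>
            ∀ a : {x // x ∈ D}, ¬((a : ℕ) ∈ R ∧ ((e a : ℕ)) ∈ C)),
        ∏ a : {x // x ∈ D}, U (a : ℕ) ((e a : ℕ)) := by
  classical
  calc
    (∑ D' ∈ (D.filter (· ∈ R)).powerset, ∑ Y' ∈ (Y.filter (· ∈ C)).powerset,
        (-1 : ℂ) ^ D'.card * pper U D' Y' * pper U (D \ D') (Y \ Y'))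
      = ∑ D' ∈ (D.filter (· ∈ R)).powerset, ∑ Y' ∈ (Y.filter (· ∈ C)).powerset,
          ∑ e : {x // x ∈ D} ≃ {y // y ∈ Y},
            (if (∀ a : {x // x ∈ D}, ((a : ℕ) ∈ D' ↔ ((e a : ℕ)) ∈ Y')) then
              (-1 : ℂ) ^ D'.card else 0) * ∏ a : {x // x ∈ D}, U (a : ℕ) ((e a : ℕ)) := by
        refine Finset.sum_congr rfl fun D' hD' => Finset.sum_congr rfl fun Y' hY' => ?_
        have h1 : D' ⊆ D := (Finset.mem_powerset.mp hD').trans (Finset.filter_subset _ _)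
        have h2 : Y' ⊆ Y := (Finset.mem_powerset.mp hY').trans (Finset.filter_subset _ _)
        rw [mul_assoc, lemA_s5 U h1 h2, Finset.mul_sum, Finset.sum_filter]
        refine Finset.sum_congr rfl fun e _ => ?_
        split <;> simp
    _ = ∑ D' ∈ (D.filter (· ∈ R)).powerset,
          ∑ e : {x // x ∈ D} ≃ {y // y ∈ Y}, ∑ Y' ∈ (Y.filter (· ∈ C)).powerset,
            (if (∀ a : {x // x ∈ D}, ((a : ℕ) ∈ D' ↔ ((e a : ℕ)) ∈ Y')) then
              (-1 : ℂ) ^ D'.card else 0) * ∏ a : {x // x ∈ D}, U (a : ℕ) ((e a : ℕ)) :=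
        Finset.sum_congr rfl fun _ _ => Finset.sum_comm
    _ = ∑ e : {x // x ∈ D} ≃ {y // y ∈ Y}, ∑ D' ∈ (D.filter (· ∈ R)).powerset,
          ∑ Y' ∈ (Y.filter (· ∈ C)).powerset,
            (if (∀ a : {x // x ∈ D}, ((a : ℕ) ∈ D' ↔ ((e a : ℕ)) ∈ Y')) then
              (-1 : ℂ) ^ D'.card else 0) * ∏ a : {x // x ∈ D}, U (a : ℕ) ((e a : ℕ)) :=
        Finset.sum_comm
    _ = ∑ e : {x // x ∈ D} ≃ {y // y ∈ Y},
          (∑ D' ∈ (D.filter (· ∈ R)).powerset, ∑ Y' ∈ (Y.filter (· ∈ C)).powerset,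
            (if (∀ a : {x // x ∈ D}, ((a : ℕ) ∈ D' ↔ ((e a : ℕ)) ∈ Y')) then
              (-1 : ℂ) ^ D'.card else 0)) * ∏ a : {x // x ∈ D}, U (a : ℕ) ((e a : ℕ)) := by
        refine Finset.sum_congr rfl fun e _ => ?_
        rw [Finset.sum_mul]
        exact Finset.sum_congr rfl fun D' _ => by rw [Finset.sum_mul]
    _ = ∑ e : {x // x ∈ D} ≃ {y // y ∈ Y},
          (if (∀ a : {x // x ∈ D}, ¬((a : ℕ) ∈ R ∧ ((e a : ℕ)) ∈ C)) then (1 : ℂ) else 0)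
            * ∏ a : {x // x ∈ D}, U (a : ℕ) ((e a : ℕ)) := by
        refine Finset.sum_congr rfl fun e _ => ?_
        rw [lemB_s5 R C e]
    _ = ∑ e ∈ Finset.univ.filter
          (fun e : {x // x ∈ D} ≃ {y // y ∈ Y} =>
            ∀ a : {x // x ∈ D}, ¬((a : ℕ) ∈ R ∧ ((e a : ℕ)) ∈ C)),
        ∏ a : {x // x ∈ D}, U (a : ℕ) ((e a : ℕ)) := by
        rw [Finset.sum_filter]
        exact Finset.sum_congr rfl fun e _ => by split <;> simp
end

section
/- Let B : ℕ → ℕ → ℂ be symmetric, let Y ⊆ ℕ be a finite set and C ⊆ ℕ. Writing lhaf_B(s) for the partial loop hafnian of a finite set s and lhaf_{−B}(s) for the same quantity with B replaced by −B, one has Σ_{T ⊆ Y ∩ C} lhaf_{−B}(T) · lhaf_B(Y \ T) = Σ_σ ∏_{i ∈ Y, i ≤ σ(i)} B(i, σ(i)), where the right-hand sum is over all involutive bijections σ of Y such that for every i ∈ Y ∩ C one has σ(i) ∉ C (i.e., σ contains no matched pair, and no loop, lying entirely inside C). -/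
/-- The partial loop hafnian of a finite set `s ⊆ ℕ` with respect to `B`:
the sum over involutive bijections `σ` of `s` of `∏_{i ∈ s, i ≤ σ i} B i (σ i)`. -/
noncomputable def lhaf (B : ℕ → ℕ → ℂ) (s : Finset ℕ) : ℂ :=
  ∑ σ ∈ Finset.univ.filter (fun σ : Equiv.Perm {x // x ∈ s} => ∀ x, σ (σ x) = x),
    ∏ i ∈ Finset.univ.filter (fun i : {x // x ∈ s} => (i : ℕ) ≤ (σ i : ℕ)),
      B (i : ℕ) ((σ i : ℕ))

section Aux

open Finset

noncomputable local instance : DecidableEq (ℕ → ℕ) := Classical.decEq _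

/-- Extend a permutation of the subtype `{x // x ∈ s}` to a function `ℕ → ℕ`,
acting as the identity off `s`. -/
noncomputable def extFun (s : Finset ℕ) (σ : Equiv.Perm {x // x ∈ s}) : ℕ → ℕ :=
  fun n => if h : n ∈ s then ((σ ⟨n, h⟩ : {x // x ∈ s}) : ℕ) else n

/-- The finset of involutions of `s`, viewed as functions `ℕ → ℕ` fixing the
complement of `s`. -/
noncomputable def invos (s : Finset ℕ) : Finset (ℕ → ℕ) :=
  (Finset.univ.filter (fun σ : Equiv.Perm {x // x ∈ s} => ∀ x, σ (σ x) = x)).image (extFun s)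

lemma extFun_inj (s : Finset ℕ) : Function.Injective (extFun s) := by
  intro σ τ h
  refine Equiv.ext fun x => ?_
  have h1 := congrFun h (x : ℕ)
  simp only [extFun, dif_pos x.2] at h1
  exact Subtype.ext (by simpa using h1)

lemma mem_invos {s : Finset ℕ} {f : ℕ → ℕ} :
    f ∈ invos s ↔ (∀ n ∈ s, f n ∈ s) ∧ (∀ n ∈ s, f (f n) = n) ∧ (∀ n, n ∉ s → f n = n) := by
  constructor
  · intro hf
    simp only [invos, mem_image, mem_filter, mem_univ, true_and] at hf
    obtain ⟨σ, hσ, rfl⟩ := hf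
    refine ⟨?_, ?_, ?_⟩
    · intro n hn
      simp only [extFun, dif_pos hn]
      exact (σ ⟨n, hn⟩).2
    · intro n hn
      have h1 : extFun s σ n = ((σ ⟨n, hn⟩ : {x // x ∈ s}) : ℕ) := by
        simp [extFun, dif_pos hn]
      have h2 : extFun s σ n ∈ s := by rw [h1]; exact (σ ⟨n, hn⟩).2
      rw [h1]
      simp only [extFun, dif_pos (σ ⟨n, hn⟩).2]
      have : (⟨((σ ⟨n, hn⟩ : {x // x ∈ s}) : ℕ), (σ ⟨n, hn⟩).2⟩ : {x // x ∈ s}) = σ ⟨n, hn⟩ :=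
        Subtype.ext rfl
      rw [this, hσ]
    · intro n hn
      simp [extFun, dif_neg hn]
  · rintro ⟨h1, h2, h3⟩
    let σ : Equiv.Perm {x // x ∈ s} :=
      { toFun := fun x => ⟨f x, h1 x x.2⟩
        invFun := fun x => ⟨f x, h1 x x.2⟩
        left_inv := fun x => Subtype.ext (h2 x x.2)
        right_inv := fun x => Subtype.ext (h2 x x.2) }
    simp only [invos, mem_image, mem_filter, mem_univ, true_and]
    refine ⟨σ, fun x => Subtype.ext (h2 x x.2), ?_⟩
    funext n
    by_cases hn : n ∈ s
    · simp [extFun, dif_pos hn, σ, Equiv.coe_fn_mk]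
    · simp [extFun, dif_neg hn, h3 n hn]

lemma extFun_apply_mem {s : Finset ℕ} (σ : Equiv.Perm {x // x ∈ s}) (x : {x // x ∈ s}) :
    extFun s σ (x : ℕ) = ((σ x : {x // x ∈ s}) : ℕ) := by
  simp [extFun, dif_pos x.2]

lemma prod_extFun (F : ℕ → ℕ → ℂ) (s : Finset ℕ) (σ : Equiv.Perm {x // x ∈ s}) :
    (∏ i ∈ Finset.univ.filter (fun i : {x // x ∈ s} => (i : ℕ) ≤ (σ i : ℕ)),
        F (i : ℕ) ((σ i : ℕ)))
      = ∏ i ∈ s.filter (fun i => i ≤ extFun s σ i), F i (extFun s σ i) := by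
  rw [Finset.prod_filter, Finset.prod_filter, Finset.univ_eq_attach,
    ← Finset.prod_attach s (fun n => if n ≤ extFun s σ n then F n (extFun s σ n) else 1)]
  refine Finset.prod_congr rfl fun x _ => ?_
  rw [extFun_apply_mem σ x]

lemma lhaf_eq (F : ℕ → ℕ → ℂ) (s : Finset ℕ) :
    lhaf F s = ∑ f ∈ invos s, ∏ i ∈ s.filter (fun i => i ≤ f i), F i (f i) := by
  rw [lhaf, invos, Finset.sum_image (fun x _ y _ h => extFun_inj s h)]
  exact Finset.sum_congr rfl fun σ _ => prod_extFun F s σ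

lemma sum_invos (F : ℕ → ℕ → ℂ) (s : Finset ℕ) (p : (ℕ → ℕ) → Prop) [DecidablePred p]
    (q : Equiv.Perm {x // x ∈ s} → Prop) [DecidablePred q]
    (hpq : ∀ σ : Equiv.Perm {x // x ∈ s}, (∀ x, σ (σ x) = x) → (q σ ↔ p (extFun s σ))) :
    (∑ σ ∈ Finset.univ.filter (fun σ : Equiv.Perm {x // x ∈ s} => (∀ x, σ (σ x) = x) ∧ q σ),
      ∏ i ∈ Finset.univ.filter (fun i : {x // x ∈ s} => (i : ℕ) ≤ (σ i : ℕ)),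
        F (i : ℕ) ((σ i : ℕ)))
    = ∑ f ∈ (invos s).filter p, ∏ i ∈ s.filter (fun i => i ≤ f i), F i (f i) := by
  have himg : (invos s).filter p
      = (Finset.univ.filter
          (fun σ : Equiv.Perm {x // x ∈ s} => (∀ x, σ (σ x) = x) ∧ q σ)).image (extFun s) := by
    ext f
    simp only [invos, Finset.mem_filter, Finset.mem_image, Finset.mem_univ, true_and]
    constructor
    · rintro ⟨⟨σ, hσ, rfl⟩, hp⟩
      exact ⟨σ, ⟨hσ, (hpq σ hσ).2 hp⟩, rfl⟩
    · rintro ⟨σ, ⟨hσ, hq⟩, rfl⟩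
      exact ⟨⟨σ, hσ, rfl⟩, (hpq σ hσ).1 hq⟩
  rw [himg, Finset.sum_image (fun x _ y _ h => extFun_inj s h)]
  exact Finset.sum_congr rfl fun σ _ => prod_extFun F s σ

/-- Combine two functions along a finset. -/
def combine (T : Finset ℕ) (f g : ℕ → ℕ) : ℕ → ℕ := fun n => if n ∈ T then f n else g n

/-- Restrict a function to a finset, identity outside. -/
def restr (A : Finset ℕ) (h : ℕ → ℕ) : ℕ → ℕ := fun n => if n ∈ A then h n else n

lemma combine_invo {Y T : Finset ℕ} (hT : T ⊆ Y) {f g : ℕ → ℕ}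
    (hf : f ∈ invos T) (hg : g ∈ invos (Y \ T)) : combine T f g ∈ invos Y := by
  rw [mem_invos] at hf hg ⊢
  obtain ⟨f1, f2, f3⟩ := hf; obtain ⟨g1, g2, g3⟩ := hg
  refine ⟨?_, ?_, ?_⟩
  · intro n hn
    by_cases h : n ∈ T
    · simpa [combine, h] using hT (f1 n h)
    · have hm := g1 n (Finset.mem_sdiff.2 ⟨hn, h⟩)
      simp only [combine, if_neg h]
      exact (Finset.mem_sdiff.1 hm).1
  · intro n hn
    by_cases h : n ∈ T
    · have hfn : f n ∈ T := f1 n h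
      simp [combine, h, hfn, f2 n h]
    · have hmem : n ∈ Y \ T := Finset.mem_sdiff.2 ⟨hn, h⟩
      have hgn : g n ∉ T := (Finset.mem_sdiff.1 (g1 n hmem)).2
      simp [combine, h, hgn, g2 n hmem]
  · intro n hn
    have h1 : n ∉ T := fun h => hn (hT h)
    have h2 : n ∉ Y \ T := fun h => hn (Finset.mem_sdiff.1 h).1
    simp [combine, h1, g3 n h2]

lemma restr_mem_left {Y T : Finset ℕ} (hT : T ⊆ Y) {h : ℕ → ℕ} (hh : h ∈ invos Y)
    (hcl : ∀ n ∈ T, h n ∈ T) : restr T h ∈ invos T := by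
  rw [mem_invos] at hh ⊢
  obtain ⟨a1, a2, a3⟩ := hh
  refine ⟨?_, ?_, ?_⟩
  · intro n hn; simpa [restr, hn] using hcl n hn
  · intro n hn
    have h1 : h n ∈ T := hcl n hn
    simp [restr, hn, h1, a2 n (hT hn)]
  · intro n hn; simp [restr, hn]

lemma restr_mem_right {Y T : Finset ℕ} (hT : T ⊆ Y) {h : ℕ → ℕ} (hh : h ∈ invos Y)
    (hcl : ∀ n ∈ T, h n ∈ T) : restr (Y \ T) h ∈ invos (Y \ T) := by
  rw [mem_invos] at hh ⊢
  obtain ⟨a1, a2, a3⟩ := hh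
  have hmap : ∀ n ∈ Y \ T, h n ∈ Y \ T := by
    intro n hn
    obtain ⟨hnY, hnT⟩ := Finset.mem_sdiff.1 hn
    refine Finset.mem_sdiff.2 ⟨a1 n hnY, fun hc => hnT ?_⟩
    have := hcl _ hc
    rwa [a2 n hnY] at this
  refine ⟨fun n hn => by simpa [restr, hn] using hmap n hn, ?_, ?_⟩
  · intro n hn
    have h1 := hmap n hn
    simp [restr, hn, h1, a2 n (Finset.mem_sdiff.1 hn).1]
  · intro n hn; simp [restr, hn]

lemma restr_combine_left {T : Finset ℕ} {f g : ℕ → ℕ} (hf : f ∈ invos T) :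
    restr T (combine T f g) = f := by
  funext n
  by_cases hn : n ∈ T
  · simp [restr, combine, hn]
  · simp only [restr, if_neg hn]
    exact ((mem_invos.1 hf).2.2 n hn).symm

lemma restr_combine_right {Y T : Finset ℕ} {f g : ℕ → ℕ} (hg : g ∈ invos (Y \ T)) :
    restr (Y \ T) (combine T f g) = g := by
  funext n
  by_cases hn : n ∈ Y \ T
  · have : n ∉ T := (Finset.mem_sdiff.1 hn).2
    simp [restr, combine, hn, this]
  · simp only [restr, if_neg hn]
    exact ((mem_invos.1 hg).2.2 n hn).symm

lemma combine_restr {Y T : Finset ℕ} (hT : T ⊆ Y) {h : ℕ → ℕ} (hh : h ∈ invos Y) :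
    combine T (restr T h) (restr (Y \ T) h) = h := by
  funext n
  by_cases hn : n ∈ T
  · simp [combine, restr, hn]
  · by_cases hn' : n ∈ Y \ T
    · simp [combine, restr, hn, hn']
    · have hnY : n ∉ Y := fun hc => hn' (Finset.mem_sdiff.2 ⟨hc, hn⟩)
      simp only [combine, restr, if_neg hn, if_neg hn']
      exact ((mem_invos.1 hh).2.2 n hnY).symm

lemma prod_neg_eq {s : Finset ℕ} {v : ℕ → ℂ} :
    (∏ i ∈ s, -v i) = (-1 : ℂ) ^ s.card * ∏ i ∈ s, v i := by
  rw [← Finset.prod_const, ← Finset.prod_mul_distrib]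
  exact Finset.prod_congr rfl fun i _ => by ring

lemma lhafInnerSum (Y Yc : Finset ℕ) (hYcY : Yc ⊆ Y) (h : ℕ → ℕ) (hh : h ∈ invos Y) :
    (∑ T ∈ Yc.powerset.filter (fun T => ∀ n ∈ T, h n ∈ T),
        (-1:ℂ) ^ ((T.filter (fun i => i ≤ h i)).card))
      = if Yc.filter (fun i => i ≤ h i ∧ h i ∈ Yc) = ∅ then 1 else 0 := by
  obtain ⟨a1, a2, a3⟩ := mem_invos.1 hh
  set D := Yc.filter (fun i => i ≤ h i ∧ h i ∈ Yc) with hD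
  have step : (∑ T ∈ Yc.powerset.filter (fun T => ∀ n ∈ T, h n ∈ T),
      (-1:ℂ) ^ ((T.filter (fun i => i ≤ h i)).card))
      = ∑ S ∈ D.powerset, (-1:ℂ) ^ S.card := by
    refine Finset.sum_nbij' (fun T => T.filter (fun i => i ≤ h i))
      (fun S => S ∪ S.image h) ?_ ?_ ?_ ?_ ?_
    · intro T hT
      simp only [Finset.mem_filter, Finset.mem_powerset] at hT
      obtain ⟨hTYc, hcl⟩ := hT
      rw [Finset.mem_powerset]
      intro i hi
      rw [Finset.mem_filter] at hi
      exact Finset.mem_filter.2 ⟨hTYc hi.1, hi.2, hTYc (hcl _ hi.1)⟩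
    · intro S hS
      rw [Finset.mem_powerset] at hS
      simp only [Finset.mem_filter, Finset.mem_powerset]
      constructor
      · intro n hn
        rcases Finset.mem_union.1 hn with hn | hn
        · exact Finset.filter_subset _ _ (hS hn)
        · obtain ⟨i, hi, rfl⟩ := Finset.mem_image.1 hn
          exact (Finset.mem_filter.1 (hS hi)).2.2
      · intro n hn
        rcases Finset.mem_union.1 hn with hn | hn
        · exact Finset.mem_union.2 (Or.inr (Finset.mem_image_of_mem h hn))
        · obtain ⟨i, hi, rfl⟩ := Finset.mem_image.1 hn
          have hiY : i ∈ Y := hYcY (Finset.filter_subset _ _ (hS hi))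
          rw [a2 i hiY]
          exact Finset.mem_union.2 (Or.inl hi)
    · intro T hT
      simp only [Finset.mem_filter, Finset.mem_powerset] at hT
      obtain ⟨hTYc, hcl⟩ := hT
      ext n
      simp only [Finset.mem_union, Finset.mem_filter, Finset.mem_image]
      constructor
      · rintro (⟨hn, _⟩ | ⟨i, ⟨hi, _⟩, rfl⟩)
        · exact hn
        · exact hcl _ hi
      · intro hn
        by_cases hle : n ≤ h n
        · exact Or.inl ⟨hn, hle⟩
        · refine Or.inr ⟨h n, ⟨hcl _ hn, ?_⟩, a2 n (hYcY (hTYc hn))⟩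
          rw [a2 n (hYcY (hTYc hn))]
          exact le_of_not_ge hle
    · intro S hS
      rw [Finset.mem_powerset] at hS
      ext n
      simp only [Finset.mem_filter, Finset.mem_union, Finset.mem_image]
      constructor
      · rintro ⟨hn | ⟨i, hi, rfl⟩, hle⟩
        · exact hn
        · have hiD := Finset.mem_filter.1 (hS hi)
          have hiY : i ∈ Y := hYcY hiD.1
          have hhh : h (h i) = i := a2 i hiY
          have h1 : h i ≤ i := by rw [hhh] at hle; exact hle
          have h2 : i = h i := le_antisymm hiD.2.1 h1
          rwa [← h2]
      · intro hn
        exact ⟨Or.inl hn, (Finset.mem_filter.1 (hS hn)).2.1⟩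
    · intro T _; rfl
  rw [step]
  have hz : ((∑ S ∈ D.powerset, (-1:ℤ) ^ S.card : ℤ) : ℂ) = if D = ∅ then 1 else 0 := by
    rw [Finset.sum_powerset_neg_one_pow_card]
    split <;> simp
  rw [← hz]
  push_cast
  rfl

end Aux

/-- inclusion–exclusion identity for the loop hafnian restricted to
involutions containing no matched pair (and no loop) lying entirely inside `C`. -/
theorem stmt_6 (B : ℕ → ℕ → ℂ) (hB : ∀ i j, B i j = B j i)
    (Y : Finset ℕ) (C : Set ℕ) [DecidablePred (· ∈ C)] :
    (∑ T ∈ (Y.filter (· ∈ C)).powerset, lhaf (fun i j => -B i j) T * lhaf B (Y \ T)) =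
      ∑ σ ∈ Finset.univ.filter
          (fun σ : Equiv.Perm {x // x ∈ Y} =>
            (∀ x, σ (σ x) = x) ∧ ∀ i : {x // x ∈ Y}, (i : ℕ) ∈ C → ((σ i : ℕ)) ∉ C),
        ∏ i ∈ Finset.univ.filter (fun i : {x // x ∈ Y} => (i : ℕ) ≤ (σ i : ℕ)),
          B (i : ℕ) ((σ i : ℕ)) := by
  set Yc := Y.filter (· ∈ C) with hYcdef
  have hYcY : Yc ⊆ Y := Finset.filter_subset _ _
  -- Step 1: expand the two loop hafnians as sums over involutions-as-functions
  have step1 : (∑ T ∈ Yc.powerset, lhaf (fun i j => -B i j) T * lhaf B (Y \ T))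
      = ∑ x ∈ Yc.powerset.sigma (fun T => (invos T) ×ˢ (invos (Y \ T))),
          (∏ i ∈ x.1.filter (fun i => i ≤ x.2.1 i), -B i (x.2.1 i)) *
            ∏ i ∈ (Y \ x.1).filter (fun i => i ≤ x.2.2 i), B i (x.2.2 i) := by
    rw [Finset.sum_sigma]
    refine Finset.sum_congr rfl fun T _ => ?_
    rw [lhaf_eq, lhaf_eq, Finset.sum_mul_sum, ← Finset.sum_product']
  -- Step 2: gluing bijection
  have step2 : (∑ x ∈ Yc.powerset.sigma (fun T => (invos T) ×ˢ (invos (Y \ T))),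
          (∏ i ∈ x.1.filter (fun i => i ≤ x.2.1 i), -B i (x.2.1 i)) *
            ∏ i ∈ (Y \ x.1).filter (fun i => i ≤ x.2.2 i), B i (x.2.2 i))
      = ∑ y ∈ (invos Y).sigma
            (fun h => Yc.powerset.filter (fun T => ∀ n ∈ T, h n ∈ T)),
          (-1:ℂ) ^ ((y.2.filter (fun i => i ≤ y.1 i)).card) *
            ∏ i ∈ Y.filter (fun i => i ≤ y.1 i), B i (y.1 i) := by
    refine Finset.sum_nbij' (fun x => ⟨combine x.1 x.2.1 x.2.2, x.1⟩)
      (fun y => ⟨y.2, (restr y.2 y.1, restr (Y \ y.2) y.1)⟩) ?_ ?_ ?_ ?_ ?_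
    · rintro ⟨T, f, g⟩ hx
      dsimp only at hx ⊢
      simp only [Finset.mem_sigma, Finset.mem_powerset, Finset.mem_product] at hx
      obtain ⟨hTYc, hf, hg⟩ := hx
      have hTY : T ⊆ Y := hTYc.trans hYcY
      simp only [Finset.mem_sigma, Finset.mem_filter, Finset.mem_powerset]
      refine ⟨combine_invo hTY hf hg, hTYc, fun n hn => ?_⟩
      have : combine T f g n = f n := if_pos hn
      rw [this]
      exact (mem_invos.1 hf).1 n hn
    · rintro ⟨h, T⟩ hy
      dsimp only at hy ⊢
      simp only [Finset.mem_sigma, Finset.mem_filter, Finset.mem_powerset] at hy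
      obtain ⟨hh, hTYc, hcl⟩ := hy
      have hTY : T ⊆ Y := hTYc.trans hYcY
      simp only [Finset.mem_sigma, Finset.mem_powerset, Finset.mem_product]
      exact ⟨hTYc, restr_mem_left hTY hh hcl, restr_mem_right hTY hh hcl⟩
    · rintro ⟨T, f, g⟩ hx
      dsimp only at hx ⊢
      simp only [Finset.mem_sigma, Finset.mem_powerset, Finset.mem_product] at hx
      obtain ⟨hTYc, hf, hg⟩ := hx
      show (⟨T, (restr T (combine T f g), restr (Y \ T) (combine T f g))⟩ :
        Σ _ : Finset ℕ, (ℕ → ℕ) × (ℕ → ℕ)) = ⟨T, (f, g)⟩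
      rw [restr_combine_left hf, restr_combine_right hg]
    · rintro ⟨h, T⟩ hy
      dsimp only at hy ⊢
      simp only [Finset.mem_sigma, Finset.mem_filter, Finset.mem_powerset] at hy
      obtain ⟨hh, hTYc, hcl⟩ := hy
      show (⟨combine T (restr T h) (restr (Y \ T) h), T⟩ :
        Σ _ : ℕ → ℕ, Finset ℕ) = ⟨h, T⟩
      rw [combine_restr (hTYc.trans hYcY) hh]
    · rintro ⟨T, f, g⟩ hx
      dsimp only at hx ⊢
      simp only [Finset.mem_sigma, Finset.mem_powerset, Finset.mem_product] at hx
      obtain ⟨hTYc, hf, hg⟩ := hx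
      have hTY : T ⊆ Y := hTYc.trans hYcY
      set h := combine T f g with hhdef
      have hfT : ∀ i ∈ T, h i = f i := fun i hi => if_pos hi
      have hgT : ∀ i ∈ Y \ T, h i = g i := fun i hi =>
        if_neg (Finset.mem_sdiff.1 hi).2
      have e1 : T.filter (fun i => i ≤ f i) = T.filter (fun i => i ≤ h i) :=
        Finset.filter_congr fun i hi => by rw [hfT i hi]
      have e2 : (Y \ T).filter (fun i => i ≤ g i) = (Y \ T).filter (fun i => i ≤ h i) :=
        Finset.filter_congr fun i hi => by rw [hgT i hi]
      have p1 : (∏ i ∈ T.filter (fun i => i ≤ f i), -B i (f i))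
          = ∏ i ∈ T.filter (fun i => i ≤ h i), -B i (h i) := by
        rw [e1]
        exact Finset.prod_congr rfl fun i hi => by
          rw [hfT i (Finset.mem_filter.1 hi).1]
      have p2 : (∏ i ∈ (Y \ T).filter (fun i => i ≤ g i), B i (g i))
          = ∏ i ∈ (Y \ T).filter (fun i => i ≤ h i), B i (h i) := by
        rw [e2]
        exact Finset.prod_congr rfl fun i hi => by
          rw [hgT i (Finset.mem_filter.1 hi).1]
      have hsplit : Y.filter (fun i => i ≤ h i)
          = T.filter (fun i => i ≤ h i) ∪ (Y \ T).filter (fun i => i ≤ h i) := by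
        rw [← Finset.filter_union, Finset.union_sdiff_of_subset hTY]
      have hdisj : Disjoint (T.filter (fun i => i ≤ h i))
          ((Y \ T).filter (fun i => i ≤ h i)) :=
        Finset.disjoint_filter_filter Finset.disjoint_sdiff
      rw [p1, p2, prod_neg_eq, hsplit, Finset.prod_union hdisj, mul_assoc]
  rw [step1, step2, Finset.sum_sigma]
  -- Step 3: evaluate the inner alternating sum
  have step3 : (∑ h ∈ invos Y, ∑ T ∈ Yc.powerset.filter (fun T => ∀ n ∈ T, h n ∈ T),
        (-1:ℂ) ^ ((T.filter (fun i => i ≤ h i)).card) *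
          ∏ i ∈ Y.filter (fun i => i ≤ h i), B i (h i))
      = ∑ h ∈ (invos Y).filter (fun f => ∀ i ∈ Y, i ∈ C → f i ∉ C),
          ∏ i ∈ Y.filter (fun i => i ≤ h i), B i (h i) := by
    rw [Finset.sum_filter]
    refine Finset.sum_congr rfl fun h hh => ?_
    rw [← Finset.sum_mul, lhafInnerSum Y Yc hYcY h hh]
    obtain ⟨a1, a2, a3⟩ := mem_invos.1 hh
    have hiff : (Yc.filter (fun i => i ≤ h i ∧ h i ∈ Yc) = ∅)
        ↔ (∀ i ∈ Y, i ∈ C → h i ∉ C) := by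
      rw [Finset.eq_empty_iff_forall_notMem]
      constructor
      · intro hd i hiY hiC hC
        have hhi : h i ∈ Y := a1 i hiY
        have hiYc : i ∈ Yc := by rw [hYcdef]; exact Finset.mem_filter.2 ⟨hiY, hiC⟩
        have hhiYc : h i ∈ Yc := by rw [hYcdef]; exact Finset.mem_filter.2 ⟨hhi, hC⟩
        rcases le_total i (h i) with hle | hle
        · exact hd i (Finset.mem_filter.2 ⟨hiYc, hle, hhiYc⟩)
        · refine hd (h i) (Finset.mem_filter.2 ⟨hhiYc, ?_, ?_⟩)
          · rw [a2 i hiY]; exact hle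
          · rw [a2 i hiY]; exact hiYc
      · intro hp x hx
        rw [Finset.mem_filter] at hx
        obtain ⟨hxYc, _, hhxYc⟩ := hx
        rw [hYcdef, Finset.mem_filter] at hxYc hhxYc
        exact hp x hxYc.1 hxYc.2 hhxYc.2
    by_cases hcond : ∀ i ∈ Y, i ∈ C → h i ∉ C
    · rw [if_pos (hiff.2 hcond), if_pos hcond, one_mul]
    · rw [if_neg (fun hc => hcond (hiff.1 hc)), if_neg hcond, zero_mul]
  rw [step3]
  -- Step 4: identify with the right-hand side
  exact (sum_invos B Y (fun f => ∀ i ∈ Y, i ∈ C → f i ∉ C)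
    (fun σ => ∀ i : {x // x ∈ Y}, (i : ℕ) ∈ C → ((σ i : ℕ)) ∉ C)
    (fun σ _ => by
      constructor
      · intro hq i hiY hiC
        have := hq ⟨i, hiY⟩ hiC
        rwa [extFun_apply_mem σ ⟨i, hiY⟩]
      · intro hp i hiC
        have := hp (i : ℕ) i.2 hiC
        rwa [extFun_apply_mem σ i] at this)).symm
end

section
/- Let M ≥ 1, let U be an M×M complex unitary matrix, let E be an arbitrary M×M complex matrix, and set κ = max(1, ‖U − E‖₂). Then M − ‖(U − E)/κ‖_F² ≤ 2√M·(√M + 1)·‖E‖_F. -/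
/-- Frobenius norm of a complex square matrix. -/
noncomputable def frobNorm {n : Type*} [Fintype n] (A : Matrix n n ℂ) : ℝ :=
  Real.sqrt (∑ i, ∑ j, ‖A i j‖ ^ 2)

/-- Operator norm of a complex square matrix induced by the Euclidean (ℓ²) norm. -/
noncomputable def l2OpNorm {n : Type*} [Fintype n] [DecidableEq n]
    (A : Matrix n n ℂ) : ℝ :=
  ‖LinearMap.toContinuousLinearMap (Matrix.toEuclideanLin A)‖

section FrobAux

attribute [local instance] Matrix.frobeniusNormedAddCommGroup Matrix.frobeniusNormedSpace

lemma frobNorm_eq {n : Type*} [Fintype n] (A : Matrix n n ℂ) : frobNorm A = ‖A‖ := by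
  rw [Matrix.frobenius_norm_def, frobNorm]
  simp [Real.sqrt_eq_rpow, one_div]

lemma frobNorm_nonneg {n : Type*} [Fintype n] (A : Matrix n n ℂ) : 0 ≤ frobNorm A :=
  Real.sqrt_nonneg _

lemma frobNorm_smul {n : Type*} [Fintype n] (c : ℂ) (A : Matrix n n ℂ) :
    frobNorm (c • A) = ‖c‖ * frobNorm A := by
  rw [frobNorm_eq, frobNorm_eq, norm_smul]

lemma frobNorm_add_le {n : Type*} [Fintype n] (A B : Matrix n n ℂ) :
    frobNorm (A + B) ≤ frobNorm A + frobNorm B := by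
  rw [frobNorm_eq, frobNorm_eq, frobNorm_eq]; exact norm_add_le A B

lemma frobNorm_sub_norm_le {n : Type*} [Fintype n] (A B : Matrix n n ℂ) :
    frobNorm A - frobNorm B ≤ frobNorm (A - B) := by
  rw [frobNorm_eq, frobNorm_eq, frobNorm_eq]; exact norm_sub_norm_le A B

end FrobAux

lemma frobNorm_unitary {M : ℕ} {U : Matrix (Fin M) (Fin M) ℂ}
    (hU : U ∈ Matrix.unitaryGroup (Fin M) ℂ) : frobNorm U = Real.sqrt M := by
  have h : U * star U = 1 := Matrix.mem_unitaryGroup_iff.mp hU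
  have hrow : ∀ i, ∑ j, ‖U i j‖ ^ 2 = 1 := by
    intro i
    have h1 : (∑ j, U i j * (starRingEnd ℂ) (U i j)) = 1 := by
      have := congrFun (congrFun h i) i
      simpa [Matrix.mul_apply, Matrix.one_apply, Matrix.star_apply] using this
    have h2 : ((∑ j, ‖U i j‖ ^ 2 : ℝ) : ℂ) = 1 := by
      rw [← h1]
      push_cast
      refine Finset.sum_congr rfl fun j _ => ?_
      rw [Complex.mul_conj]
      norm_cast
      exact Complex.sq_norm _
    exact_mod_cast h2
  unfold frobNorm
  congr 1
  simp [hrow]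

section OpAux

open scoped Matrix.Norms.L2Operator

lemma l2OpNorm_eq {n : Type*} [Fintype n] [DecidableEq n] (A : Matrix n n ℂ) :
    l2OpNorm A = ‖A‖ := rfl

lemma l2OpNorm_nonneg {n : Type*} [Fintype n] [DecidableEq n] (A : Matrix n n ℂ) :
    0 ≤ l2OpNorm A := norm_nonneg _

lemma l2OpNorm_unitary {M : ℕ} (hM : 1 ≤ M) {U : Matrix (Fin M) (Fin M) ℂ}
    (hU : U ∈ Matrix.unitaryGroup (Fin M) ℂ) : l2OpNorm U = 1 := by
  haveI : Nonempty (Fin M) := ⟨⟨0, hM⟩⟩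
  rw [l2OpNorm_eq]
  exact CStarRing.norm_of_mem_unitary hU

lemma l2OpNorm_sub_le {n : Type*} [Fintype n] [DecidableEq n] (A B : Matrix n n ℂ) :
    l2OpNorm (A - B) ≤ l2OpNorm A + l2OpNorm B := by
  rw [l2OpNorm_eq, l2OpNorm_eq, l2OpNorm_eq]; exact norm_sub_le A B

lemma l2OpNorm_smul {n : Type*} [Fintype n] [DecidableEq n] (c : ℂ) (A : Matrix n n ℂ) :
    l2OpNorm (c • A) = ‖c‖ * l2OpNorm A := by
  rw [l2OpNorm_eq, l2OpNorm_eq, norm_smul]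

set_option maxHeartbeats 1000000 in
lemma col_sq_le {M : ℕ} (A : Matrix (Fin M) (Fin M) ℂ) (j : Fin M) :
    ∑ i, ‖A i j‖ ^ 2 ≤ l2OpNorm A ^ 2 := by
  have h := Matrix.l2_opNorm_mulVec A (EuclideanSpace.single j (1 : ℂ))
  rw [EuclideanSpace.norm_single, norm_one, mul_one] at h
  have hx : A.mulVec (EuclideanSpace.single j (1 : ℂ)) = fun i => A i j := by
    have h0 : (EuclideanSpace.single j (1 : ℂ) : Fin M → ℂ) = Pi.single j (1 : ℂ) := rfl
    rw [h0, Matrix.mulVec_single]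
    simp
    rfl
  rw [hx] at h
  have hn : ‖(EuclideanSpace.equiv (Fin M) ℂ).symm (fun i => A i j)‖
      = Real.sqrt (∑ i, ‖A i j‖ ^ 2) := by
    rw [EuclideanSpace.norm_eq]
    simp
  rw [hn, ← l2OpNorm_eq] at h
  calc ∑ i, ‖A i j‖ ^ 2
      = Real.sqrt (∑ i, ‖A i j‖ ^ 2) ^ 2 := (Real.sq_sqrt (by positivity)).symm
    _ ≤ l2OpNorm A ^ 2 := pow_le_pow_left₀ (Real.sqrt_nonneg _) h 2

end OpAux

lemma frobNorm_le_sqrt_mul {M : ℕ} (A : Matrix (Fin M) (Fin M) ℂ) :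
    frobNorm A ≤ Real.sqrt M * l2OpNorm A := by
  have h1 : ∑ i, ∑ j, ‖A i j‖ ^ 2 ≤ M * l2OpNorm A ^ 2 := by
    rw [Finset.sum_comm]
    calc ∑ j, ∑ i, ‖A i j‖ ^ 2 ≤ ∑ _j : Fin M, l2OpNorm A ^ 2 :=
          Finset.sum_le_sum fun j _ => col_sq_le A j
      _ = M * l2OpNorm A ^ 2 := by simp [Finset.sum_const, nsmul_eq_mul]
  calc frobNorm A = Real.sqrt (∑ i, ∑ j, ‖A i j‖ ^ 2) := rfl
    _ ≤ Real.sqrt ((M : ℝ) * l2OpNorm A ^ 2) := Real.sqrt_le_sqrt h1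
    _ = Real.sqrt M * l2OpNorm A := by
        rw [Real.sqrt_mul (Nat.cast_nonneg M), Real.sqrt_sq (l2OpNorm_nonneg A)]

set_option maxHeartbeats 1000000 in
lemma l2OpNorm_le_frobNorm {M : ℕ} (A : Matrix (Fin M) (Fin M) ℂ) :
    l2OpNorm A ≤ frobNorm A := by
  unfold l2OpNorm
  refine ContinuousLinearMap.opNorm_le_bound _ (frobNorm_nonneg A) fun x => ?_
  have hax : LinearMap.toContinuousLinearMap (Matrix.toEuclideanLin A) x
      = (WithLp.equiv 2 (Fin M → ℂ)).symm (A.mulVec ((WithLp.equiv 2 (Fin M → ℂ)) x)) := rfl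
  set v : Fin M → ℂ := (WithLp.equiv 2 (Fin M → ℂ)) x with hv
  have hxnorm : ‖x‖ = Real.sqrt (∑ j, ‖v j‖ ^ 2) := by
    rw [EuclideanSpace.norm_eq]
    simp
    rfl
  have hkey : ∀ i, ‖A.mulVec v i‖ ^ 2
      ≤ (∑ j, ‖A i j‖ ^ 2) * (∑ j, ‖v j‖ ^ 2) := by
    intro i
    have h1 : ‖A.mulVec v i‖ ≤ ∑ j, ‖A i j‖ * ‖v j‖ := by
      calc ‖A.mulVec v i‖ = ‖∑ j, A i j * v j‖ := by
            simp [Matrix.mulVec, dotProduct]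
        _ ≤ ∑ j, ‖A i j * v j‖ := norm_sum_le _ _
        _ = ∑ j, ‖A i j‖ * ‖v j‖ := by simp [norm_mul]
    calc ‖A.mulVec v i‖ ^ 2
        ≤ (∑ j, ‖A i j‖ * ‖v j‖) ^ 2 := by
          apply pow_le_pow_left₀ (norm_nonneg _) h1
      _ ≤ (∑ j, ‖A i j‖ ^ 2) * (∑ j, ‖v j‖ ^ 2) :=
          Finset.sum_mul_sq_le_sq_mul_sq _ _ _
  have h2 : ∑ i, ‖A.mulVec v i‖ ^ 2
      ≤ (∑ i, ∑ j, ‖A i j‖ ^ 2) * (∑ j, ‖v j‖ ^ 2) := by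
    rw [Finset.sum_mul]
    exact Finset.sum_le_sum fun i _ => hkey i
  have h3 : ‖(WithLp.equiv 2 (Fin M → ℂ)).symm (A.mulVec v)‖
      = Real.sqrt (∑ i, ‖A.mulVec v i‖ ^ 2) := by
    rw [EuclideanSpace.norm_eq]
    simp
  rw [hax, h3, hxnorm, frobNorm, ← Real.sqrt_mul (by positivity)]
  exact Real.sqrt_le_sqrt h2

/-- `M − ‖(U − E)/κ‖_F² ≤ 2√M(√M + 1)‖E‖_F` for
`κ = max(1, ‖U − E‖₂)`. -/
theorem stmt_11 (M : ℕ) (hM : 1 ≤ M) (U E : Matrix (Fin M) (Fin M) ℂ)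
    (hU : U ∈ Matrix.unitaryGroup (Fin M) ℂ)
    (κ : ℝ) (hκ : κ = max 1 (l2OpNorm (U - E))) :
    (M : ℝ) - frobNorm (((κ : ℂ))⁻¹ • (U - E)) ^ 2 ≤
      2 * Real.sqrt M * (Real.sqrt M + 1) * frobNorm E := by
  have hF0 : 0 ≤ frobNorm E := frobNorm_nonneg E
  have hM0 : (0:ℝ) ≤ M := Nat.cast_nonneg M
  have hκ1 : (1:ℝ) ≤ κ := hκ ▸ le_max_left _ _
  have hκpos : (0:ℝ) < κ := lt_of_lt_of_le one_pos hκ1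
  have hinv : κ⁻¹ * κ = 1 := inv_mul_cancel₀ hκpos.ne'
  have hopUE : l2OpNorm (U - E) ≤ κ := hκ ▸ le_max_right _ _
  have hκle : κ ≤ 1 + frobNorm E := by
    rw [hκ]
    refine max_le (by linarith) ?_
    calc l2OpNorm (U - E) ≤ l2OpNorm U + l2OpNorm E := l2OpNorm_sub_le U E
      _ ≤ 1 + frobNorm E := by
          rw [l2OpNorm_unitary hM hU]
          exact add_le_add_right (l2OpNorm_le_frobNorm E) 1
  set Ub : Matrix (Fin M) (Fin M) ℂ := ((κ:ℂ))⁻¹ • (U - E) with hUbdef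
  have habsinv : ‖(κ:ℂ)⁻¹‖ = κ⁻¹ := by
    rw [norm_inv, Complex.norm_real, Real.norm_eq_abs, abs_of_pos hκpos]
  have hopUb : l2OpNorm Ub ≤ 1 := by
    rw [hUbdef, l2OpNorm_smul, habsinv]
    calc κ⁻¹ * l2OpNorm (U - E) ≤ κ⁻¹ * κ :=
          mul_le_mul_of_nonneg_left hopUE (inv_nonneg.mpr hκpos.le)
      _ = 1 := hinv
  have hfUb : frobNorm Ub ≤ Real.sqrt M := by
    calc frobNorm Ub ≤ Real.sqrt M * l2OpNorm Ub := frobNorm_le_sqrt_mul Ub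
      _ ≤ Real.sqrt M * 1 := mul_le_mul_of_nonneg_left hopUb (Real.sqrt_nonneg _)
      _ = Real.sqrt M := mul_one _
  have hfU : frobNorm U = Real.sqrt M := frobNorm_unitary hU
  have hdecomp : U - Ub = ((1 - (κ:ℂ)⁻¹) • U) + ((κ:ℂ)⁻¹ • E) := by
    rw [hUbdef, smul_sub]
    module
  have hinvle : κ⁻¹ ≤ 1 := by nlinarith
  have habs1 : ‖1 - (κ:ℂ)⁻¹‖ ≤ frobNorm E := by
    have he : (1 - (κ:ℂ)⁻¹) = ((1 - κ⁻¹ : ℝ) : ℂ) := by push_cast; ring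
    rw [he, Complex.norm_real, Real.norm_eq_abs, abs_of_nonneg (by linarith)]
    nlinarith [sq_nonneg (κ - 1)]
  have hdiff : frobNorm (U - Ub) ≤ (Real.sqrt M + 1) * frobNorm E := by
    calc frobNorm (U - Ub) ≤ frobNorm ((1 - (κ:ℂ)⁻¹) • U) + frobNorm ((κ:ℂ)⁻¹ • E) := by
          rw [hdecomp]; exact frobNorm_add_le _ _
      _ = ‖1 - (κ:ℂ)⁻¹‖ * frobNorm U + ‖(κ:ℂ)⁻¹‖ * frobNorm E := by
          rw [frobNorm_smul, frobNorm_smul]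
      _ ≤ frobNorm E * Real.sqrt M + 1 * frobNorm E := by
          rw [hfU, habsinv]
          have := Real.sqrt_nonneg (M:ℝ)
          gcongr
      _ = (Real.sqrt M + 1) * frobNorm E := by ring
  have hsub : frobNorm U - frobNorm Ub ≤ frobNorm (U - Ub) := frobNorm_sub_norm_le U Ub
  have hMeq : (M:ℝ) = frobNorm U ^ 2 := by rw [hfU, Real.sq_sqrt hM0]
  have hUb0 : 0 ≤ frobNorm Ub := frobNorm_nonneg Ub
  have hd0 : 0 ≤ frobNorm (U - Ub) := frobNorm_nonneg _
  have hs0 : 0 ≤ Real.sqrt M := Real.sqrt_nonneg _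
  nlinarith [mul_le_mul_of_nonneg_right hsub (by linarith [hfU ▸ hs0, hUb0] :
      (0:ℝ) ≤ frobNorm U + frobNorm Ub),
    mul_le_mul_of_nonneg_left hfUb hd0,
    mul_le_mul_of_nonneg_right hdiff hs0,
    mul_le_mul_of_nonneg_right hdiff (by linarith : (0:ℝ) ≤ 2 * Real.sqrt M)]
end

section
/- Let M ≥ 1, let O be a 2M×2M real orthogonal matrix, let r : Fin M → ℝ, let S_sq be the 2M×2M block-diagonal matrix whose i-th 2×2 diagonal block is diag(e^{r_i}, e^{−r_i}), and set S = O·S_sq and V₁ = (1/2)·S·Sᵀ. Let V₂ be a 2M×2M real symmetric positive semidefinite matrix with trace(S⁻¹·V₂·S⁻ᵀ) ≥ M, and set X = V₁ − V₂. If ‖X‖_F·√(2·Σ_i cosh(4·r_i)) < 2, then 1 − (det(V₁ + V₂))^{−1/2} ≤ (1/2)·‖X‖_F·√(2·Σ_i cosh(4·r_i)). -/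
open Matrix

/-- Frobenius norm of a real square matrix. -/
noncomputable def frobNormR {n : Type*} [Fintype n] (A : Matrix n n ℝ) : ℝ :=
  Real.sqrt (∑ i, ∑ j, (A i j) ^ 2)

section Aux

variable {n : Type*} [Fintype n] [DecidableEq n]

lemma trace_eq_sum_eigs {A : Matrix n n ℝ} (hA : A.IsHermitian) :
    A.trace = ∑ i, hA.eigenvalues i := by
  nth_rewrite 1 [hA.spectral_theorem]
  rw [Unitary.conjStarAlgAut_apply, Matrix.trace_mul_comm, ← Matrix.mul_assoc,
    Matrix.mem_unitaryGroup_iff'.mp (hA.eigenvectorUnitary).2, Matrix.one_mul]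
  simp [Matrix.trace_diagonal]

lemma det_le_exp_trace {A : Matrix n n ℝ} (hA : A.PosSemidef) :
    A.det ≤ Real.exp (A.trace - Fintype.card n) := by
  rw [hA.1.det_eq_prod_eigenvalues, trace_eq_sum_eigs hA.1]
  have h1 : ∀ i ∈ Finset.univ (α := n),
      (hA.1.eigenvalues i : ℝ) ≤ Real.exp (hA.1.eigenvalues i - 1) := by
    intro i _
    have := Real.add_one_le_exp (hA.1.eigenvalues i - 1)
    linarith
  calc (∏ i, (hA.1.eigenvalues i : ℝ))
      ≤ ∏ i, Real.exp (hA.1.eigenvalues i - 1) :=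
        Finset.prod_le_prod (fun i _ => hA.eigenvalues_nonneg i) h1
    _ = Real.exp (∑ i, (hA.1.eigenvalues i - 1)) := by rw [← Real.exp_sum]
    _ = Real.exp (∑ i, hA.1.eigenvalues i - Fintype.card n) := by
        rw [Finset.sum_sub_distrib]
        simp [Finset.card_univ]

end Aux

set_option maxHeartbeats 2000000 in
theorem stmt_16 (M : ℕ) (hM : 1 ≤ M)
    (O : Matrix (Fin M × Fin 2) (Fin M × Fin 2) ℝ)
    (hO : O ∈ Matrix.orthogonalGroup (Fin M × Fin 2) ℝ)
    (r : Fin M → ℝ)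
    (Ssq : Matrix (Fin M × Fin 2) (Fin M × Fin 2) ℝ)
    (hSsq : Ssq = Matrix.diagonal fun p =>
      if p.2 = 0 then Real.exp (r p.1) else Real.exp (-r p.1))
    (S : Matrix (Fin M × Fin 2) (Fin M × Fin 2) ℝ) (hS : S = O * Ssq)
    (V₁ : Matrix (Fin M × Fin 2) (Fin M × Fin 2) ℝ) (hV₁ : V₁ = (1/2 : ℝ) • (S * Sᵀ))
    (V₂ : Matrix (Fin M × Fin 2) (Fin M × Fin 2) ℝ) (hV₂ : V₂.PosSemidef)
    (htr : (M : ℝ) ≤ Matrix.trace (S⁻¹ * V₂ * (S⁻¹)ᵀ))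
    (X : Matrix (Fin M × Fin 2) (Fin M × Fin 2) ℝ) (hX : X = V₁ - V₂)
    (hsmall : frobNormR X * Real.sqrt (2 * ∑ i, Real.cosh (4 * r i)) < 2) :
    1 - (V₁ + V₂).det ^ (-(1/2) : ℝ) ≤
      (1/2) * frobNormR X * Real.sqrt (2 * ∑ i, Real.cosh (4 * r i)) := by
  set d : Fin M × Fin 2 → ℝ :=
    fun p => if p.2 = 0 then Real.exp (r p.1) else Real.exp (-r p.1) with hd
  have hd0 : ∀ p, d p ≠ 0 := by
    intro p; rw [hd]; dsimp only; split <;> exact (Real.exp_pos _).ne'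
  set E : Matrix (Fin M × Fin 2) (Fin M × Fin 2) ℝ :=
    Matrix.diagonal (fun p => (d p)⁻¹) with hE
  have hSsqE : Ssq * E = 1 := by
    rw [hSsq, hE, Matrix.diagonal_mul_diagonal]
    have hfun : (fun i => d i * (d i)⁻¹) = (fun _ : Fin M × Fin 2 => (1 : ℝ)) :=
      funext fun p => mul_inv_cancel₀ (hd0 p)
    rw [hfun, Matrix.diagonal_one]
  have hOOT : O * Oᵀ = 1 := by
    have h := Matrix.mem_unitaryGroup_iff.mp hO
    rwa [Matrix.star_eq_conjTranspose, Matrix.conjTranspose_eq_transpose_of_trivial] at h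
  have hOTO : Oᵀ * O = 1 := by
    have h := Matrix.mem_unitaryGroup_iff'.mp hO
    rwa [Matrix.star_eq_conjTranspose, Matrix.conjTranspose_eq_transpose_of_trivial] at h
  set T : Matrix (Fin M × Fin 2) (Fin M × Fin 2) ℝ := E * Oᵀ with hT
  have hST : S * T = 1 := by
    rw [hS, hT, Matrix.mul_assoc, ← Matrix.mul_assoc Ssq E Oᵀ, hSsqE, Matrix.one_mul, hOOT]
  have hTS : T * S = 1 := mul_eq_one_comm.mp hST
  have hSTt : Sᵀ * Tᵀ = 1 := by
    rw [← Matrix.transpose_mul, hTS, Matrix.transpose_one]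
  -- key product identity
  have hTSST : T * (S * Sᵀ) * Tᵀ = 1 := by
    rw [← Matrix.mul_assoc T S Sᵀ, hTS, Matrix.one_mul, hSTt]
  -- the congruenced matrix
  set A : Matrix (Fin M × Fin 2) (Fin M × Fin 2) ℝ := T * (V₁ + V₂) * Tᵀ with hAdef
  have hTV1T : T * V₁ * Tᵀ = (1/2 : ℝ) • (1 : Matrix (Fin M × Fin 2) (Fin M × Fin 2) ℝ) := by
    rw [hV₁, Matrix.mul_smul, Matrix.smul_mul, hTSST]
  have hA1 : A = (1/2 : ℝ) • (1 : Matrix (Fin M × Fin 2) (Fin M × Fin 2) ℝ) + T * V₂ * Tᵀ := by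
    rw [hAdef, Matrix.mul_add, Matrix.add_mul, hTV1T]
  have hApd : A.PosDef := by
    rw [hA1]
    apply Matrix.PosDef.add_posSemidef
    · have h12 : ((1/2 : ℝ) • (1 : Matrix (Fin M × Fin 2) (Fin M × Fin 2) ℝ)) =
          Matrix.diagonal (fun _ => (1/2 : ℝ)) := by
        ext i j
        by_cases h : i = j <;> simp [h, Matrix.one_apply, Matrix.diagonal]
      rw [h12]
      exact Matrix.posDef_diagonal_iff.mpr (fun i => by norm_num)
    · have h := hV₂.mul_mul_conjTranspose_same T
      rwa [Matrix.conjTranspose_eq_transpose_of_trivial] at h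
  -- determinant identities
  have hdetSsq : Ssq.det = 1 := by
    rw [hSsq, Matrix.det_diagonal]
    rw [Fintype.prod_prod_type]
    have : ∀ i : Fin M, (∏ j : Fin 2,
        (if (j : Fin 2) = 0 then Real.exp (r i) else Real.exp (-r i))) = 1 := by
      intro i
      rw [Fin.prod_univ_two]
      norm_num [← Real.exp_add]
    simp [this, hd, ← Real.exp_add]
  have hdetSS : S.det * S.det = 1 := by
    have hO2 : O.det * O.det = 1 := by
      have h := congrArg Matrix.det hOOT
      rwa [Matrix.det_mul, Matrix.det_transpose, Matrix.det_one] at h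
    have hSd : S.det = O.det := by rw [hS, Matrix.det_mul, hdetSsq, mul_one]
    rw [hSd]; exact hO2
  have hdetT : S.det * T.det = 1 := by
    rw [← Matrix.det_mul, hST, Matrix.det_one]
  have hdetT2 : T.det * T.det = 1 := by
    have h : (S.det * T.det) * (S.det * T.det) = 1 := by rw [hdetT]; norm_num
    calc T.det * T.det = (S.det * S.det) * (T.det * T.det) := by rw [hdetSS, one_mul]
      _ = (S.det * T.det) * (S.det * T.det) := by ring
      _ = 1 := h
  have hdetA : A.det = (V₁ + V₂).det := by
    rw [hAdef, Matrix.det_mul, Matrix.det_mul, Matrix.det_transpose]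
    calc T.det * (V₁ + V₂).det * T.det = (T.det * T.det) * (V₁ + V₂).det := by ring
      _ = (V₁ + V₂).det := by rw [hdetT2, one_mul]
  -- A = 1 - T X Tᵀ
  have hsum : V₁ + V₂ = S * Sᵀ - X := by
    rw [hX, hV₁]
    module
  have hA2 : A = 1 - T * X * Tᵀ := by
    rw [hAdef, hsum, Matrix.mul_sub, Matrix.sub_mul, hTSST]
  -- trace identity
  set C : Matrix (Fin M × Fin 2) (Fin M × Fin 2) ℝ := Tᵀ * T with hC
  have htrA : A.trace - (Fintype.card (Fin M × Fin 2) : ℝ) = - (C * X).trace := by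
    rw [hA2, Matrix.trace_sub, Matrix.trace_one]
    rw [Matrix.trace_mul_cycle T X Tᵀ, hC]
    ring_nf
  -- Cauchy-Schwarz bound on trace (C * X)
  set K : ℝ := Real.sqrt (2 * ∑ i, Real.cosh (4 * r i)) with hK
  have hCsq : (∑ i, ∑ j, (C i j)^2) = 2 * ∑ i, Real.cosh (4 * r i) := by
    have h1 : (∑ i, ∑ j, (C i j)^2) = ((Cᵀ * C).trace) := by
      simp only [Matrix.trace, Matrix.diag, Matrix.mul_apply, Matrix.transpose_apply, sq]
      exact Finset.sum_comm
    have hCT : Cᵀ = C := by rw [hC, Matrix.transpose_mul, Matrix.transpose_transpose]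
    have hCform : C = O * (E * E) * Oᵀ := by
      rw [hC, hT, Matrix.transpose_mul, hE, Matrix.diagonal_transpose,
        Matrix.transpose_transpose]
      rw [Matrix.mul_assoc, ← Matrix.mul_assoc (Matrix.diagonal fun p => (d p)⁻¹)]
      rw [← Matrix.mul_assoc]
    have hCC : C * C = O * ((E * E) * (E * E)) * Oᵀ := by
      rw [hCform]
      calc (O * (E * E) * Oᵀ) * (O * (E * E) * Oᵀ)
          = O * (E * E) * ((Oᵀ * O) * ((E * E) * Oᵀ)) := by simp only [Matrix.mul_assoc]
        _ = O * (E * E) * ((E * E) * Oᵀ) := by rw [hOTO, Matrix.one_mul]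
        _ = O * ((E * E) * (E * E)) * Oᵀ := by simp only [Matrix.mul_assoc]
    have htrCC : (Cᵀ * C).trace = ((E * E) * (E * E)).trace := by
      rw [hCT, hCC, Matrix.trace_mul_cycle, ← Matrix.mul_assoc, hOTO, Matrix.one_mul]
    rw [h1, htrCC]
    rw [hE, Matrix.diagonal_mul_diagonal, Matrix.diagonal_mul_diagonal,
      Matrix.trace_diagonal]
    rw [Fintype.sum_prod_type]
    rw [Finset.mul_sum]
    apply Finset.sum_congr rfl
    intro i _
    rw [Fin.sum_univ_two]
    have h0 : d (i, 0) = Real.exp (r i) := by simp [hd]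
    have h01 : d (i, 1) = Real.exp (-r i) := by simp [hd]
    have key : ∀ a : ℝ, Real.exp a * Real.exp a * (Real.exp a * Real.exp a)
        = Real.exp (4 * a) := by
      intro a
      rw [← Real.exp_add, ← Real.exp_add]
      congr 1; ring
    rw [h0, h01, ← Real.exp_neg, ← Real.exp_neg, key, key, Real.cosh_eq]
    rw [show (4 : ℝ) * -(-r i) = 4 * r i from by ring,
      show (4 : ℝ) * (-r i) = -(4 * r i) from by ring]
    ring
  have hXsq : frobNormR X = Real.sqrt (∑ i, ∑ j, (X i j)^2) := rfl
  have htrCX : |(C * X).trace| ≤ K * frobNormR X := by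
    have hform : (C * X).trace = ∑ p : (Fin M × Fin 2) × (Fin M × Fin 2),
        C p.1 p.2 * X p.2 p.1 := by
      rw [Fintype.sum_prod_type]
      simp [Matrix.trace, Matrix.diag, Matrix.mul_apply]
    have hcs := Finset.sum_mul_sq_le_sq_mul_sq Finset.univ
      (fun p : (Fin M × Fin 2) × (Fin M × Fin 2) => C p.1 p.2)
      (fun p : (Fin M × Fin 2) × (Fin M × Fin 2) => X p.2 p.1)
    have hsum1 : (∑ p : (Fin M × Fin 2) × (Fin M × Fin 2), (C p.1 p.2)^2)
        = 2 * ∑ i, Real.cosh (4 * r i) := by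
      rw [Fintype.sum_prod_type]; exact hCsq
    have hsum2 : (∑ p : (Fin M × Fin 2) × (Fin M × Fin 2), (X p.2 p.1)^2)
        = ∑ i, ∑ j, (X i j)^2 := by
      rw [Fintype.sum_prod_type]
      exact Finset.sum_comm
    rw [hform]
    rw [← Real.sqrt_sq_eq_abs]
    calc Real.sqrt ((∑ p : (Fin M × Fin 2) × (Fin M × Fin 2), C p.1 p.2 * X p.2 p.1)^2)
        ≤ Real.sqrt ((∑ p : (Fin M × Fin 2) × (Fin M × Fin 2), (C p.1 p.2)^2) *
            (∑ p : (Fin M × Fin 2) × (Fin M × Fin 2), (X p.2 p.1)^2)) :=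
          Real.sqrt_le_sqrt hcs
      _ = K * frobNormR X := by
          rw [hsum1, hsum2, Real.sqrt_mul, hK, hXsq]
          positivity
  -- putting it together
  have hdet_pos : 0 < (V₁ + V₂).det := by rw [← hdetA]; exact hApd.det_pos
  have hdet_le : (V₁ + V₂).det ≤ Real.exp (K * frobNormR X) := by
    rw [← hdetA]
    refine le_trans (det_le_exp_trace hApd.posSemidef) (Real.exp_le_exp.mpr ?_)
    rw [htrA]
    calc -(C * X).trace ≤ |(C * X).trace| := neg_le_abs _
      _ ≤ K * frobNormR X := htrCX
  have hlog : Real.log ((V₁ + V₂).det) ≤ K * frobNormR X :=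
    (Real.log_le_iff_le_exp hdet_pos).mpr hdet_le
  have hrpow : (V₁ + V₂).det ^ (-(1/2) : ℝ)
      = Real.exp (Real.log ((V₁ + V₂).det) * (-(1/2))) :=
    Real.rpow_def_of_pos hdet_pos _
  have hexp : 1 - Real.exp (Real.log ((V₁ + V₂).det) * (-(1/2)))
      ≤ Real.log ((V₁ + V₂).det) / 2 := by
    have h := Real.add_one_le_exp (Real.log ((V₁ + V₂).det) * (-(1/2)))
    linarith
  have hfinal : (1/2 : ℝ) * frobNormR X * K = (K * frobNormR X) / 2 := by ring
  rw [hrpow, hfinal]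
  linarith
end
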